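/- arXiv:math/9512226 — 4 statements merged into one kernel-verified Lean document; each statement's English description precedes it below -/
import Mathlib

section
/- If κ is a measurable cardinal and the set of strongly compact cardinals below κ is unbounded in κ, then κ is strongly compact. -/
open Cardinal

/-- `F` is an ultrafilter on the carrier set `A`: it is a collection of subsets of `A`
containing `A` but not `∅`, closed under supersets (within `A`) and finite intersections,
and containing either `X` or `A \ X` for every `X ⊆ A`. -/
def IsUltrafilterOn {α : Type} (A : Set α) (F : Set (Set α)) : Prop :=
  (∀ X ∈ F, X ⊆ A) ∧ A ∈ F ∧ ∅ ∉ F ∧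
    (∀ X ∈ F, ∀ Y, Y ⊆ A → X ⊆ Y → Y ∈ F) ∧
    (∀ X ∈ F, ∀ Y ∈ F, X ∩ Y ∈ F) ∧
    (∀ X, X ⊆ A → X ∈ F ∨ A \ X ∈ F)

/-- `F` is `κ`-complete: the intersection of any (nonempty) family of fewer than `κ`
members of `F` is again in `F`. -/
def IsKComplete {α : Type} (κ : Cardinal) (F : Set (Set α)) : Prop :=
  ∀ S : Set (Set α), S.Nonempty → #S < κ → (∀ X ∈ S, X ∈ F) → ⋂₀ S ∈ F

/-- `P_κ(λ)`: the collection of subsets of `λ` (represented as subsets of a canonical type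
of order type `λ`) of cardinality less than `κ`. -/
def Pkl (κ lam : Cardinal.{0}) : Set (Set lam.ord.ToType) := {x | #x < κ}

/-- `F` is a fine filter on `P_κ(λ)`. -/
def IsFine (κ lam : Cardinal.{0}) (F : Set (Set (Set lam.ord.ToType))) : Prop :=
  ∀ a : lam.ord.ToType, {x | x ∈ Pkl κ lam ∧ a ∈ x} ∈ F

/-- `F` is a normal filter on `P_κ(λ)`. -/
def IsNormalOnPkl (κ lam : Cardinal.{0}) (F : Set (Set (Set lam.ord.ToType))) : Prop :=
  ∀ f : Set lam.ord.ToType → lam.ord.ToType,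
    {x | x ∈ Pkl κ lam ∧ f x ∈ x} ∈ F →
      ∃ a : lam.ord.ToType, {x | x ∈ Pkl κ lam ∧ f x = a} ∈ F

/-- `κ` is a measurable cardinal: `κ` is uncountable and carries a `κ`-complete
nonprincipal ultrafilter. -/
def IsMeasurableCard (κ : Cardinal.{0}) : Prop :=
  ℵ₀ < κ ∧ ∃ F : Set (Set κ.ord.ToType),
    IsUltrafilterOn Set.univ F ∧ IsKComplete κ F ∧
      ∀ a : κ.ord.ToType, ({a} : Set κ.ord.ToType) ∉ F

/-- `κ` is `λ` strongly compact: there is a `κ`-complete fine ultrafilter on `P_κ(λ)`. -/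
def IsLamStronglyCompact (κ lam : Cardinal.{0}) : Prop :=
  ∃ F : Set (Set (Set lam.ord.ToType)),
    IsUltrafilterOn (Pkl κ lam) F ∧ IsKComplete κ F ∧ IsFine κ lam F

/-- `κ` is strongly compact: `κ` is `λ` strongly compact for every `λ ≥ κ`. -/
def IsStronglyCompactCard (κ : Cardinal.{0}) : Prop :=
  ∀ lam : Cardinal.{0}, κ ≤ lam → IsLamStronglyCompact κ lam

/-- `κ` is `λ` supercompact: there is a `κ`-complete fine normal ultrafilter on `P_κ(λ)`. -/
def IsLamSupercompact (κ lam : Cardinal.{0}) : Prop :=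
  ∃ F : Set (Set (Set lam.ord.ToType)),
    IsUltrafilterOn (Pkl κ lam) F ∧ IsKComplete κ F ∧ IsFine κ lam F ∧
      IsNormalOnPkl κ lam F

/-- `κ` is supercompact: `κ` is `λ` supercompact for every `λ ≥ κ`. -/
def IsSupercompactCard (κ : Cardinal.{0}) : Prop :=
  ∀ lam : Cardinal.{0}, κ ≤ lam → IsLamSupercompact κ lam

/-- Fiber lemma: a `θ`-complete ultrafilter decides every partition into fewer than `θ` pieces. -/
lemma fiber_lemma {α : Type} {A : Set α} {F : Set (Set α)} (hF : IsUltrafilterOn A F)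
    {θ : Cardinal} (hcomp : IsKComplete θ F) {ι : Type} (f : α → ι) (hι : #ι < θ) :
    ∃ i, {x ∈ A | f x = i} ∈ F := by
  obtain ⟨hsub, hA, hemp, hup, hint, hdich⟩ := hF
  by_contra hcon
  push_neg at hcon
  have hc' : ∀ i, A \ {x ∈ A | f x = i} ∈ F := by
    intro i
    rcases hdich {x ∈ A | f x = i} (Set.sep_subset _ _) with h' | h'
    · exact absurd h' (hcon i)
    · exact h'
  have hAne : A.Nonempty := by
    rcases A.eq_empty_or_nonempty with h | h
    · exact absurd (h ▸ hA) hemp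
    · exact h
  obtain ⟨x₀, hx₀⟩ := hAne
  have hmem : ⋂₀ Set.range (fun i => A \ {x ∈ A | f x = i}) ∈ F := by
    apply hcomp
    · exact ⟨_, ⟨f x₀, rfl⟩⟩
    · exact Cardinal.mk_range_le.trans_lt hι
    · rintro _ ⟨i, rfl⟩; exact hc' i
  have hempty : ⋂₀ Set.range (fun i => A \ {x ∈ A | f x = i}) = ∅ := by
    ext x
    simp only [Set.mem_sInter, Set.mem_range, Set.mem_empty_iff_false, iff_false]
    intro hx
    have := hx _ ⟨f x, rfl⟩
    exact this.2 ⟨this.1, rfl⟩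
  rw [hempty] at hmem
  exact hemp hmem

/-- In a `κ`-complete nonprincipal ultrafilter on `univ`, sets of size `< κ` are null. -/
lemma compl_mem_of_small {α : Type} {F : Set (Set α)} (hF : IsUltrafilterOn Set.univ F)
    {κ : Cardinal} (hcomp : IsKComplete κ F) (hnp : ∀ a : α, ({a} : Set α) ∉ F)
    {S : Set α} (hS : #S < κ) : Sᶜ ∈ F ∧ S ∉ F := by
  obtain ⟨hsub, hA, hemp, hup, hint, hdich⟩ := hF
  have hsing : ∀ a : α, ({a}ᶜ : Set α) ∈ F := by
    intro a
    rcases hdich {a} (Set.subset_univ _) with h | h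
    · exact absurd h (hnp a)
    · rwa [Set.compl_eq_univ_diff]
  have hScompl : Sᶜ ∈ F := by
    rcases S.eq_empty_or_nonempty with h | h
    · rw [h, Set.compl_empty]; exact hA
    · obtain ⟨a₀, ha₀⟩ := h
      have hmem : ⋂₀ ((fun a => ({a} : Set α)ᶜ) '' S) ∈ F := by
        apply hcomp
        · exact ⟨_, ⟨a₀, ha₀, rfl⟩⟩
        · exact Cardinal.mk_image_le.trans_lt hS
        · rintro _ ⟨a, _, rfl⟩; exact hsing a
      have heq : ⋂₀ ((fun a => ({a} : Set α)ᶜ) '' S) = Sᶜ := by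
        ext x
        simp only [Set.sInter_image, Set.mem_iInter, Set.mem_compl_iff, Set.mem_singleton_iff]
        constructor
        · intro h hx; exact h x hx rfl
        · rintro h a ha rfl; exact h ha
      rwa [heq] at hmem
  refine ⟨hScompl, fun hSF => ?_⟩
  have := hint _ hSF _ hScompl
  rw [Set.inter_compl_self] at this
  exact hemp this

/-- The cardinality of `Iio α` in `κ.ord.ToType` is less than `κ`. -/
lemma mk_Iio_lt (κ : Cardinal.{0}) (α : κ.ord.ToType) : #(Set.Iio α) < κ := by
  haveI : IsWellOrder κ.ord.ToType (· < ·) := isWellOrder_lt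
  have h1 : #(Set.Iio α) = (Ordinal.typein (α := κ.ord.ToType) (· < ·) α).card :=
    Ordinal.card_typein (r := ((· < ·) : κ.ord.ToType → κ.ord.ToType → Prop)) α
  have h2 := Ordinal.typein_lt_self α
  rw [Cardinal.lt_ord] at h2
  rwa [h1]

/-- There is an element of `κ.ord.ToType` whose initial segment has any given size `< κ`. -/
lemma exists_Iio_eq (κ : Cardinal.{0}) {δ : Cardinal.{0}} (hδ : δ < κ) :
    ∃ α : κ.ord.ToType, #(Set.Iio α) = δ := by
  haveI : IsWellOrder κ.ord.ToType (· < ·) := isWellOrder_lt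
  have hlt : δ.ord < Ordinal.type ((· < ·) : κ.ord.ToType → κ.ord.ToType → Prop) := by
    rw [Ordinal.type_toType]
    exact Cardinal.ord_lt_ord.mpr hδ
  refine ⟨Ordinal.enum (· < ·) ⟨δ.ord, hlt⟩, ?_⟩
  have h1 : #(Set.Iio (Ordinal.enum (· < ·) ⟨δ.ord, hlt⟩ : κ.ord.ToType))
      = (Ordinal.typein (α := κ.ord.ToType) (· < ·) (Ordinal.enum (· < ·) ⟨δ.ord, hlt⟩)).card :=
    Ordinal.card_typein (r := ((· < ·) : κ.ord.ToType → κ.ord.ToType → Prop)) _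
  rw [h1, Ordinal.typein_enum, Cardinal.card_ord]

/-- Ulam: a cardinal carrying a `κ`-complete nonprincipal ultrafilter is not a successor. -/
lemma measurable_not_succ {κ : Cardinal.{0}} (hℵ : ℵ₀ < κ) {F : Set (Set κ.ord.ToType)}
    (hF : IsUltrafilterOn Set.univ F) (hcomp : IsKComplete κ F)
    (hnp : ∀ a : κ.ord.ToType, ({a} : Set κ.ord.ToType) ∉ F) (μ : Cardinal.{0}) :
    κ ≠ Order.succ μ := by
  intro hsucc
  have hμκ : μ < κ := hsucc ▸ Order.lt_succ μ
  have hμℵ : ℵ₀ ≤ μ := by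
    by_contra h
    push_neg at h
    have : κ ≤ ℵ₀ := hsucc ▸ Order.succ_le_of_lt h
    exact absurd hℵ (not_lt.mpr this)
  have hIio : ∀ α : κ.ord.ToType, #(Set.Iio α) ≤ μ := by
    intro α
    exact Order.lt_succ_iff.mp (lt_of_lt_of_eq (mk_Iio_lt κ α) hsucc)
  have hM : #μ.ord.ToType = μ := Cardinal.mk_ord_toType μ
  have hg : ∀ α : κ.ord.ToType, ∃ g : (Set.Iio α) → μ.ord.ToType, Function.Injective g := by
    intro α
    have : #(Set.Iio α) ≤ #μ.ord.ToType := by rw [hM]; exact hIio α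
    obtain ⟨g⟩ := Cardinal.le_def _ _ |>.mp this
    exact ⟨g, g.injective⟩
  choose g hginj using hg
  set h : κ.ord.ToType → κ.ord.ToType → Option μ.ord.ToType :=
    fun β α => if hh : β < α then some (g α ⟨β, hh⟩) else none with hdef
  have key : ∀ β : κ.ord.ToType, ∃ ξ : μ.ord.ToType, {α | h β α = some ξ} ∈ F := by
    intro β
    have hopt : #(Option μ.ord.ToType) < κ := by
      rw [Cardinal.mk_option, hM, Cardinal.add_one_eq hμℵ]
      exact hμκ
    obtain ⟨i, hi⟩ := fiber_lemma hF hcomp (h β) hopt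
    rw [Set.sep_univ] at hi
    match i with
    | some ξ => exact ⟨ξ, hi⟩
    | none =>
      exfalso
      have heq : {x : κ.ord.ToType | h β x = none} = Set.Iic β := by
        ext α
        simp only [Set.mem_setOf_eq, Set.mem_Iic, hdef]
        constructor
        · intro hα
          by_contra hc
          rw [dif_pos (not_le.mp hc)] at hα
          exact Option.some_ne_none _ hα
        · intro hα
          rw [dif_neg (not_lt.mpr hα)]
      rw [heq] at hi
      have hsmall : #(Set.Iic β) < κ := by
        rw [← Set.Iio_insert]
        refine lt_of_le_of_lt (Cardinal.mk_insert_le) ?_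
        exact Cardinal.add_lt_of_lt hℵ.le (mk_Iio_lt κ β) (Cardinal.one_lt_aleph0.trans hℵ)
      exact (compl_mem_of_small hF hcomp hnp hsmall).2 hi
  choose Ξ hΞ using key
  have hninj : ¬ Function.Injective Ξ := by
    intro hinj
    have := Cardinal.mk_le_of_injective hinj
    rw [Cardinal.mk_ord_toType, hM] at this
    exact absurd this (not_le.mpr hμκ)
  rw [Function.Injective] at hninj
  push_neg at hninj
  obtain ⟨β, β', heq, hne⟩ := hninj
  obtain ⟨hsub, hA, hemp, hup, hint, hdich⟩ := hF
  have hmem := hint _ (hΞ β) _ (hΞ β')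
  have hzero : {α | h β α = some (Ξ β)} ∩ {α | h β' α = some (Ξ β')} = ∅ := by
    ext α
    simp only [Set.mem_inter_iff, Set.mem_setOf_eq, Set.mem_empty_iff_false, iff_false, not_and,
      hdef]
    intro h1 h2
    by_cases hb : β < α
    · rw [dif_pos hb] at h1
      by_cases hb' : β' < α
      · rw [dif_pos hb'] at h2
        apply hne
        have e1 := Option.some_injective _ h1
        have e2 := Option.some_injective _ h2
        rw [heq] at e1
        exact congrArg Subtype.val (hginj α (e1.trans e2.symm))
      · rw [dif_neg hb'] at h2; exact nomatch h2
    · rw [dif_neg hb] at h1; exact nomatch h1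
  rw [hzero] at hmem
  exact hemp hmem

/-- Below a measurable cardinal, cardinal successors stay below. -/
lemma succ_lt_of_measurable {κ : Cardinal.{0}} (hℵ : ℵ₀ < κ) {F : Set (Set κ.ord.ToType)}
    (hF : IsUltrafilterOn Set.univ F) (hcomp : IsKComplete κ F)
    (hnp : ∀ a : κ.ord.ToType, ({a} : Set κ.ord.ToType) ∉ F) {δ : Cardinal.{0}} (hδ : δ < κ) :
    Order.succ δ < κ :=
  lt_of_le_of_ne (Order.succ_le_of_lt hδ)
    (fun hc => measurable_not_succ hℵ hF hcomp hnp δ hc.symm)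

/-- The set of points whose initial segment has size more than `δ` is large. -/
lemma tail_mem {κ : Cardinal.{0}} (hℵ : ℵ₀ < κ) {F : Set (Set κ.ord.ToType)}
    (hF : IsUltrafilterOn Set.univ F) (hcomp : IsKComplete κ F)
    (hnp : ∀ a : κ.ord.ToType, ({a} : Set κ.ord.ToType) ∉ F) {δ : Cardinal.{0}} (hδ : δ < κ) :
    {α : κ.ord.ToType | δ < #(Set.Iio α)} ∈ F := by
  have hσ : Order.succ δ < κ := succ_lt_of_measurable hℵ hF hcomp hnp hδ
  obtain ⟨α₀, hα₀⟩ := exists_Iio_eq κ hσ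
  have hsub : {α : κ.ord.ToType | ¬ δ < #(Set.Iio α)} ⊆ Set.Iio α₀ := by
    intro α hα
    simp only [Set.mem_setOf_eq, not_lt] at hα
    by_contra hge
    rw [Set.mem_Iio, not_lt] at hge
    have : #(Set.Iio α₀) ≤ #(Set.Iio α) :=
      Cardinal.mk_le_mk_of_subset (Set.Iio_subset_Iio hge)
    rw [hα₀] at this
    exact absurd (this.trans hα) (not_le.mpr (Order.lt_succ δ))
  have hsmall : #{α : κ.ord.ToType | ¬ δ < #(Set.Iio α)} < κ := by
    exact lt_of_le_of_lt (Cardinal.mk_le_mk_of_subset hsub) (mk_Iio_lt κ α₀)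
  have := (compl_mem_of_small hF hcomp hnp hsmall).1
  convert this using 1
  ext α
  simp [not_not]

/-- If `κ` is a measurable cardinal and the set of strongly compact
cardinals below `κ` is unbounded in `κ`, then `κ` is strongly compact. -/
theorem measurable_limit_of_stronglyCompact_isStronglyCompact (κ : Cardinal.{0})
    (hmeas : IsMeasurableCard κ)
    (hunb : ∀ β : Cardinal.{0}, β < κ →
      ∃ γ : Cardinal.{0}, β ≤ γ ∧ γ < κ ∧ IsStronglyCompactCard γ) :
    IsStronglyCompactCard κ := by
  intro lam hlam
  obtain ⟨hℵ, U, hU, hUc, hUnp⟩ := hmeas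
  classical
  have h1 : ∀ α : κ.ord.ToType, ∃ γ : Cardinal.{0},
      #(Set.Iio α) ≤ γ ∧ γ < κ ∧ IsStronglyCompactCard γ :=
    fun α => hunb _ (mk_Iio_lt κ α)
  choose γ hγ1 hγ2 hγ3 using h1
  have h2 : ∀ α : κ.ord.ToType, ∃ G : Set (Set (Set lam.ord.ToType)),
      IsUltrafilterOn (Pkl (γ α) lam) G ∧ IsKComplete (γ α) G ∧ IsFine (γ α) lam G :=
    fun α => hγ3 α lam ((hγ2 α).le.trans hlam)
  choose V hVu hVc hVf using h2
  have hmono : ∀ α, Pkl (γ α) lam ⊆ Pkl κ lam :=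
    fun α x hx => lt_trans (show #x < γ α from hx) (hγ2 α)
  have hUmono : ∀ {X Y : Set κ.ord.ToType}, X ∈ U → X ⊆ Y → Y ∈ U :=
    fun hX hXY => hU.2.2.2.1 _ hX _ (Set.subset_univ _) hXY
  set W : Set (Set (Set lam.ord.ToType)) :=
    {X | X ⊆ Pkl κ lam ∧ {α : κ.ord.ToType | X ∩ Pkl (γ α) lam ∈ V α} ∈ U} with hWdef
  have hmemW : ∀ X : Set (Set lam.ord.ToType), X ∈ W ↔
      X ⊆ Pkl κ lam ∧ {α : κ.ord.ToType | X ∩ Pkl (γ α) lam ∈ V α} ∈ U := by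
    intro X; rw [hWdef]; rfl
  -- W is an ultrafilter
  have hWu : IsUltrafilterOn (Pkl κ lam) W := by
    refine ⟨fun X hX => ((hmemW X).mp hX).1, ?_, ?_, ?_, ?_, ?_⟩
    · rw [hmemW]
      refine ⟨subset_rfl, ?_⟩
      have heq : {α : κ.ord.ToType | Pkl κ lam ∩ Pkl (γ α) lam ∈ V α} = Set.univ := by
        ext α
        simp only [Set.mem_setOf_eq, Set.mem_univ, iff_true]
        rw [Set.inter_eq_self_of_subset_right (hmono α)]
        exact (hVu α).2.1
      rw [heq]; exact hU.2.1
    · rw [hmemW]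
      rintro ⟨-, hmem⟩
      have heq : {α : κ.ord.ToType | (∅ : Set (Set lam.ord.ToType)) ∩ Pkl (γ α) lam ∈ V α}
          = ∅ := by
        ext α
        simp only [Set.empty_inter, Set.mem_setOf_eq, Set.mem_empty_iff_false, iff_false]
        exact (hVu α).2.2.1
      rw [heq] at hmem
      exact hU.2.2.1 hmem
    · intro X hX Y hY hXY
      obtain ⟨hX1, hX2⟩ := (hmemW X).mp hX
      rw [hmemW]
      refine ⟨hY, hUmono hX2 ?_⟩
      intro α hα
      exact (hVu α).2.2.2.1 _ hα _ Set.inter_subset_right (Set.inter_subset_inter_left _ hXY)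
    · intro X hX Y hY
      obtain ⟨hX1, hX2⟩ := (hmemW X).mp hX
      obtain ⟨hY1, hY2⟩ := (hmemW Y).mp hY
      rw [hmemW]
      refine ⟨fun x hx => hX1 hx.1, hUmono (hU.2.2.2.2.1 _ hX2 _ hY2) ?_⟩
      intro α hα
      show X ∩ Y ∩ Pkl (γ α) lam ∈ V α
      rw [Set.inter_inter_distrib_right]
      exact (hVu α).2.2.2.2.1 _ hα.1 _ hα.2
    · intro X hX
      rcases hU.2.2.2.2.2 {α : κ.ord.ToType | X ∩ Pkl (γ α) lam ∈ V α} (Set.subset_univ _)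
        with h | h
      · left; rw [hmemW]; exact ⟨hX, h⟩
      · right
        rw [hmemW]
        refine ⟨Set.diff_subset, hUmono h ?_⟩
        intro α hα
        show (Pkl κ lam \ X) ∩ Pkl (γ α) lam ∈ V α
        rcases (hVu α).2.2.2.2.2 (X ∩ Pkl (γ α) lam) Set.inter_subset_right with h' | h'
        · exact absurd h' hα.2
        · have heq : (Pkl κ lam \ X) ∩ Pkl (γ α) lam
              = Pkl (γ α) lam \ (X ∩ Pkl (γ α) lam) := by
            ext x
            constructor
            · rintro ⟨⟨hxk, hxX⟩, hxg⟩; exact ⟨hxg, fun hc => hxX hc.1⟩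
            · rintro ⟨hxg, hxX⟩; exact ⟨⟨hmono α hxg, fun hc => hxX ⟨hc, hxg⟩⟩, hxg⟩
          rw [heq]; exact h'
  -- W is fine
  have hWfine : IsFine κ lam W := by
    intro a
    rw [hmemW]
    refine ⟨fun x hx => hx.1, ?_⟩
    have heq : {α : κ.ord.ToType | {x | x ∈ Pkl κ lam ∧ a ∈ x} ∩ Pkl (γ α) lam ∈ V α}
        = Set.univ := by
      ext α
      simp only [Set.mem_setOf_eq, Set.mem_univ, iff_true]
      have heq2 : {x | x ∈ Pkl κ lam ∧ a ∈ x} ∩ Pkl (γ α) lam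
          = {x | x ∈ Pkl (γ α) lam ∧ a ∈ x} := by
        ext x
        constructor
        · rintro ⟨⟨hxk, hax⟩, hxg⟩; exact ⟨hxg, hax⟩
        · rintro ⟨hxg, hax⟩; exact ⟨⟨hmono α hxg, hax⟩, hxg⟩
      rw [heq2]
      exact hVf α a
    rw [heq]; exact hU.2.1
  -- partition property of W
  have hWfiber : ∀ (ι : Type) (f : Set lam.ord.ToType → ι), #ι < κ →
      ∃ i, {x ∈ Pkl κ lam | f x = i} ∈ W := by
    intro ι f hι
    have hιne : Nonempty ι := ⟨f ∅⟩
    have hch : ∀ α, ∃ i : ι, (#ι < γ α → {x ∈ Pkl (γ α) lam | f x = i} ∈ V α) := by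
      intro α
      by_cases hgood : #ι < γ α
      · obtain ⟨i, hi⟩ := fiber_lemma (hVu α) (hVc α) f hgood
        exact ⟨i, fun _ => hi⟩
      · exact ⟨Classical.arbitrary ι, fun hcon => absurd hcon hgood⟩
    choose c hcspec using hch
    obtain ⟨i₀, hi₀⟩ := fiber_lemma hU hUc c hι
    rw [Set.sep_univ] at hi₀
    refine ⟨i₀, ?_⟩
    rw [hmemW]
    refine ⟨Set.sep_subset _ _, ?_⟩
    have hGood : {α : κ.ord.ToType | #ι < #(Set.Iio α)} ∈ U := tail_mem hℵ hU hUc hUnp hι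
    refine hUmono (hU.2.2.2.2.1 _ hi₀ _ hGood) ?_
    rintro α ⟨hα1, hα2⟩
    show {x ∈ Pkl κ lam | f x = i₀} ∩ Pkl (γ α) lam ∈ V α
    have hg : #ι < γ α := lt_of_lt_of_le hα2 (hγ1 α)
    have hc := hcspec α hg
    rw [show c α = i₀ from hα1] at hc
    have heq : {x ∈ Pkl κ lam | f x = i₀} ∩ Pkl (γ α) lam
        = {x ∈ Pkl (γ α) lam | f x = i₀} := by
      ext x
      constructor
      · rintro ⟨⟨hxk, hfx⟩, hxg⟩; exact ⟨hxg, hfx⟩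
      · rintro ⟨hxg, hfx⟩; exact ⟨⟨hmono α hxg, hfx⟩, hxg⟩
    rw [heq]; exact hc
  -- W is κ-complete
  have hWcomp : IsKComplete κ W := by
    intro S hSne hScard hSmem
    have hfex : ∀ x : Set lam.ord.ToType, ∃ v : Option ↥S,
        (∀ (X : Set (Set lam.ord.ToType)) (hXS : X ∈ S), v = some ⟨X, hXS⟩ → x ∉ X) ∧
        (v = none → ∀ X ∈ S, x ∈ X) := by
      intro x
      by_cases hex : ∃ X, X ∈ S ∧ x ∉ X
      · refine ⟨some ⟨hex.choose, hex.choose_spec.1⟩, ?_, fun hv => nomatch hv⟩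
        intro X hXS hv
        have hxval : hex.choose = X := congrArg Subtype.val (Option.some_injective _ hv)
        exact hxval ▸ hex.choose_spec.2
      · push_neg at hex
        exact ⟨none, fun X hXS hv => (nomatch hv), fun _ X hXS => hex X hXS⟩
    choose f hf1 hf2 using hfex
    have hcard : #(Option ↥S) < κ := by
      rw [Cardinal.mk_option]
      exact Cardinal.add_lt_of_lt hℵ.le hScard (Cardinal.one_lt_aleph0.trans hℵ)
    obtain ⟨v, hv⟩ := hWfiber _ f hcard
    cases v with
    | some w =>
      exfalso
      obtain ⟨X, hXS⟩ := w
      have hXW : X ∈ W := hSmem X hXS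
      have hint := hWu.2.2.2.2.1 _ hv _ hXW
      have hempty : {x ∈ Pkl κ lam | f x = some ⟨X, hXS⟩} ∩ X = ∅ := by
        rw [Set.eq_empty_iff_forall_notMem]
        rintro x ⟨⟨hxk, hfx⟩, hxX⟩
        exact hf1 x X hXS hfx hxX
      rw [hempty] at hint
      exact hWu.2.2.1 hint
    | none =>
      obtain ⟨X₀, hX₀⟩ := hSne
      have hsub2 : ⋂₀ S ⊆ Pkl κ lam :=
        (Set.sInter_subset_of_mem hX₀).trans (((hmemW X₀).mp (hSmem X₀ hX₀)).1)
      refine hWu.2.2.2.1 _ hv _ hsub2 ?_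
      rintro x ⟨hxk, hfx⟩
      rw [Set.mem_sInter]
      exact hf2 x hfx
  exact ⟨W, hWu, hWcomp, hWfine⟩
end

section
/- If κ is the least measurable cardinal such that the set of strongly compact cardinals below κ is unbounded in κ, then κ is not 2^κ supercompact, i.e., there is no κ-complete fine normal ultrafilter on P_κ(2^κ). -/
open Cardinal

namespace Menas
open Ordinal Set

noncomputable section

instance iwo0 (o : Ordinal.{0}) : IsWellOrder o.ToType (· < ·) := isWellOrder_lt

/-- `typein` specialized to `o.ToType`. -/
def ty {o : Ordinal.{0}} (a : o.ToType) : Ordinal :=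
  Ordinal.typein ((· < ·) : o.ToType → o.ToType → Prop) a

/-- `enum` specialized to `o.ToType`. -/
def en (o : Ordinal.{0}) (ι : Ordinal) (h : ι < o) : o.ToType :=
  Ordinal.enum ((· < ·) : o.ToType → o.ToType → Prop) ⟨ι, by rwa [type_toType]⟩

variable {o : Ordinal.{0}}

theorem ty_lt_ty {a b : o.ToType} : ty a < ty b ↔ a < b := typein_lt_typein _

theorem ty_inj {a b : o.ToType} : ty a = ty b ↔ a = b := typein_inj _

theorem ty_lt (a : o.ToType) : ty a < o := typein_lt_self a

theorem ty_en (ι : Ordinal) (h : ι < o) : ty (en o ι h) = ι := typein_enum _ _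

theorem en_ty (a : o.ToType) : en o (ty a) (ty_lt a) = a := enum_typein _ _

theorem en_lt_iff {ι : Ordinal} {h : ι < o} {a : o.ToType} : en o ι h < a ↔ ι < ty a := by
  rw [← ty_lt_ty, ty_en]

theorem mk_Iio_toType (a : o.ToType) : #(Set.Iio a) = (ty a).card :=
  Ordinal.card_typein (r := ((· < ·) : o.ToType → o.ToType → Prop)) a

theorem mk_toType' : #o.ToType = o.card := mk_toType o

end
end Menas
namespace Menas2
open Ordinal Set Menas Classical

noncomputable section

abbrev TK (κ : Cardinal.{0}) := ((2 : Cardinal.{0}) ^ κ).ord.ToType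

def bs (κ : Cardinal.{0}) (P : Set (TK κ) → Prop) : Set (Set (TK κ)) :=
  {x | x ∈ Pkl κ (2 ^ κ) ∧ P x}

instance instNonemptyTK (κ : Cardinal.{0}) : Nonempty (TK κ) := by
  refine Ordinal.toType_nonempty_iff_ne_zero.mpr (fun h => ?_)
  have h2 : ((2 : Cardinal.{0}) ^ κ) = 0 := by
    have := Cardinal.card_ord (2 ^ κ)
    rw [h] at this; simpa using this.symm
  exact (Cardinal.power_ne_zero κ two_ne_zero) h2

variable {κ : Cardinal.{0}} {U : Set (Set (Set (TK κ)))}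

theorem mem_bs {P : Set (TK κ) → Prop} {x} : x ∈ bs κ P ↔ x ∈ Pkl κ (2 ^ κ) ∧ P x := Iff.rfl

theorem bs_subset (P : Set (TK κ) → Prop) : bs κ P ⊆ Pkl κ (2 ^ κ) := fun _ h => h.1

theorem ae_mono (hUF : IsUltrafilterOn (Pkl κ (2 ^ κ)) U) {P Q : Set (TK κ) → Prop}
    (h : bs κ P ∈ U) (him : ∀ x ∈ Pkl κ (2 ^ κ), P x → Q x) : bs κ Q ∈ U :=
  hUF.2.2.2.1 _ h _ (bs_subset Q) (fun x hx => ⟨hx.1, him x hx.1 hx.2⟩)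

theorem ae_of_subset (hUF : IsUltrafilterOn (Pkl κ (2 ^ κ)) U) {X : Set (Set (TK κ))}
    {Q : Set (TK κ) → Prop} (h : X ∈ U) (him : X ⊆ bs κ Q) : bs κ Q ∈ U :=
  hUF.2.2.2.1 _ h _ (bs_subset Q) him

theorem ae_and (hUF : IsUltrafilterOn (Pkl κ (2 ^ κ)) U) {P Q : Set (TK κ) → Prop}
    (h1 : bs κ P ∈ U) (h2 : bs κ Q ∈ U) : bs κ (fun x => P x ∧ Q x) ∈ U := by
  have := hUF.2.2.2.2.1 _ h1 _ h2
  refine ae_of_subset hUF this ?_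
  rintro x ⟨⟨h1, h2⟩, ⟨_, h4⟩⟩; exact ⟨h1, h2, h4⟩

theorem ae_nonempty (hUF : IsUltrafilterOn (Pkl κ (2 ^ κ)) U) {P : Set (TK κ) → Prop}
    (h : bs κ P ∈ U) : ∃ x ∈ Pkl κ (2 ^ κ), P x := by
  rcases (bs κ P).eq_empty_or_nonempty with he | ⟨x, hx⟩
  · rw [he] at h; exact absurd h hUF.2.2.1
  · exact ⟨x, hx.1, hx.2⟩

theorem ae_not_both (hUF : IsUltrafilterOn (Pkl κ (2 ^ κ)) U) {P : Set (TK κ) → Prop}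
    (h1 : bs κ P ∈ U) (h2 : bs κ (fun x => ¬ P x) ∈ U) : False := by
  obtain ⟨x, -, h, hn⟩ := ae_nonempty hUF (ae_and hUF h1 h2)
  exact hn h

theorem ae_decide (hUF : IsUltrafilterOn (Pkl κ (2 ^ κ)) U) (P : Set (TK κ) → Prop) :
    bs κ P ∈ U ∨ bs κ (fun x => ¬ P x) ∈ U := by
  rcases hUF.2.2.2.2.2 (bs κ P) (bs_subset P) with h | h
  · exact Or.inl h
  · refine Or.inr (ae_of_subset hUF h ?_)
    rintro x ⟨h1, h2⟩
    exact ⟨h1, fun hP => h2 ⟨h1, hP⟩⟩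

theorem ae_true (hUF : IsUltrafilterOn (Pkl κ (2 ^ κ)) U) : bs κ (fun _ => True) ∈ U := by
  refine ae_of_subset hUF hUF.2.1 ?_; exact fun x hx => ⟨hx, trivial⟩

theorem ae_all (hUF : IsUltrafilterOn (Pkl κ (2 ^ κ)) U) (hC : IsKComplete κ U)
    {I : Type} (hne : Nonempty I) (hI : #I < κ) {P : I → Set (TK κ) → Prop}
    (h : ∀ i, bs κ (P i) ∈ U) : bs κ (fun x => ∀ i, P i x) ∈ U := by
  have hS : ⋂₀ (Set.range fun i => bs κ (P i)) ∈ U := by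
    refine hC _ (Set.range_nonempty _) (lt_of_le_of_lt Cardinal.mk_range_le hI) ?_
    rintro X ⟨i, rfl⟩; exact h i
  rw [Set.sInter_range] at hS
  refine ae_of_subset hUF hS ?_
  intro x hx
  rw [Set.mem_iInter] at hx
  exact ⟨(hx hne.some).1, fun i => (hx i).2⟩

theorem ae_exists (hUF : IsUltrafilterOn (Pkl κ (2 ^ κ)) U) (hC : IsKComplete κ U)
    {I : Type} (hI : #I < κ) {P : I → Set (TK κ) → Prop}
    (h : bs κ (fun x => ∃ i, P i x) ∈ U) : ∃ i, bs κ (P i) ∈ U := by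
  by_contra hno
  push_neg at hno
  rcases isEmpty_or_nonempty I with hI0 | hne
  · obtain ⟨x, -, i, -⟩ := ae_nonempty hUF h
    exact hI0.elim i
  · have : ∀ i, bs κ (fun x => ¬ P i x) ∈ U := fun i =>
      (ae_decide hUF (P i)).resolve_left (hno i)
    have := ae_all hUF hC hne hI this
    refine ae_not_both hUF h (ae_mono hUF this ?_)
    rintro x - hall ⟨i, hi⟩; exact hall i hi

theorem ae_fine (hFine : IsFine κ (2 ^ κ) U) (a : TK κ) : bs κ (fun x => a ∈ x) ∈ U := hFine a

theorem ae_normal (hUF : IsUltrafilterOn (Pkl κ (2 ^ κ)) U)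
    (hNorm : IsNormalOnPkl κ (2 ^ κ) U) {P : Set (TK κ) → TK κ → Prop}
    (h : bs κ (fun x => ∃ t ∈ x, P x t) ∈ U) :
    ∃ a : TK κ, bs κ (fun x => a ∈ x ∧ P x a) ∈ U := by
  classical
  set f : Set (TK κ) → TK κ := fun x =>
    if hx : ∃ t ∈ x, P x t then hx.choose else Classical.arbitrary _ with hf
  have h1 : {x | x ∈ Pkl κ (2 ^ κ) ∧ f x ∈ x} ∈ U := by
    refine ae_of_subset hUF h ?_
    rintro x ⟨h1, h2⟩
    refine ⟨h1, ?_⟩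
    simp only [hf, dif_pos h2]
    exact h2.choose_spec.1
  obtain ⟨a, ha⟩ := hNorm f h1
  refine ⟨a, ?_⟩
  have h2 : bs κ (fun x => f x = a) ∈ U := ha
  refine ae_mono hUF (ae_and hUF h h2) ?_
  rintro x - ⟨h2, heq⟩
  rw [← heq]
  simp only [hf, dif_pos h2]
  exact h2.choose_spec

theorem ae_closed_un (hUF : IsUltrafilterOn (Pkl κ (2 ^ κ)) U) (hNorm : IsNormalOnPkl κ (2 ^ κ) U)
    (hFine : IsFine κ (2 ^ κ) U) (f : TK κ → TK κ) :
    bs κ (fun x => ∀ t ∈ x, f t ∈ x) ∈ U := by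
  rcases ae_decide hUF (fun x => ∀ t ∈ x, f t ∈ x) with h | h
  · exact h
  · exfalso
    have h' : bs κ (fun x => ∃ t ∈ x, f t ∉ x) ∈ U := by
      refine ae_mono hUF h ?_
      intro x _ hx
      push_neg at hx; exact hx
    obtain ⟨t, ht⟩ := ae_normal hUF hNorm h'
    refine ae_not_both hUF (ae_fine hFine (f t)) (ae_mono hUF ht ?_)
    rintro x - ⟨-, hft⟩; exact hft

theorem ae_closed_bin (hUF : IsUltrafilterOn (Pkl κ (2 ^ κ)) U) (hNorm : IsNormalOnPkl κ (2 ^ κ) U)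
    (hFine : IsFine κ (2 ^ κ) U) (g : TK κ → TK κ → TK κ) :
    bs κ (fun x => ∀ s ∈ x, ∀ t ∈ x, g s t ∈ x) ∈ U := by
  rcases ae_decide hUF (fun x => ∀ s ∈ x, ∀ t ∈ x, g s t ∈ x) with h | h
  · exact h
  · exfalso
    have h' : bs κ (fun x => ∃ s ∈ x, ∃ t ∈ x, g s t ∉ x) ∈ U := by
      refine ae_mono hUF h ?_
      intro x _ hx
      push_neg at hx; exact hx
    obtain ⟨s, hs⟩ := ae_normal hUF hNorm h'
    have h'' : bs κ (fun x => ∃ t ∈ x, g s t ∉ x) ∈ U := by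
      refine ae_mono hUF hs ?_
      rintro x - ⟨-, h2⟩; exact h2
    obtain ⟨t, ht⟩ := ae_normal hUF hNorm h''
    refine ae_not_both hUF (ae_fine hFine (g s t)) (ae_mono hUF ht ?_)
    rintro x - ⟨-, hgt⟩; exact hgt

end
end Menas2
namespace Menas3
open Ordinal Set Menas Menas2 Classical

noncomputable section

variable (κ : Cardinal.{0})

theorem ord_lt_ord_two_pow : κ.ord < ((2 : Cardinal.{0}) ^ κ).ord :=
  Cardinal.ord_lt_ord.2 (Cardinal.cantor κ)

def t0 : TK κ := en _ κ.ord (ord_lt_ord_two_pow κ)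

theorem ty_t0 : ty (t0 κ) = κ.ord := ty_en _ _

def kp : Set (TK κ) := Set.Iio (t0 κ)

theorem mk_kp : #(kp κ) = κ := by
  rw [kp, mk_Iio_toType, ty_t0, Cardinal.card_ord]

theorem wfTK : WellFounded ((· < ·) : TK κ → TK κ → Prop) := IsWellFounded.wf

/-- downward closedness (within `kp`) -/
def dcl (x : Set (TK κ)) : Prop := ∀ t ∈ x, t ∈ kp κ → ∀ s, s < t → s ∈ x

def Good (x : Set (TK κ)) : Prop := x ∈ Pkl κ (2 ^ κ) ∧ dcl κ x

theorem kp_diff_nonempty {x : Set (TK κ)} (hx : x ∈ Pkl κ (2 ^ κ)) :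
    (kp κ \ x).Nonempty := by
  rw [Set.diff_nonempty]
  intro hsub
  have : #(kp κ) ≤ #x := Cardinal.mk_le_mk_of_subset hsub
  rw [mk_kp] at this
  exact absurd (lt_of_le_of_lt this hx) (lt_irrefl _)

/-- the least element of `kp κ` not in `x` -/
def cx (x : Set (TK κ)) : TK κ :=
  if h : (kp κ \ x).Nonempty then (wfTK κ).min _ h else t0 κ

variable {κ}

theorem cx_mem_kp {x : Set (TK κ)} (hx : x ∈ Pkl κ (2 ^ κ)) : cx κ x ∈ kp κ := by
  rw [cx, dif_pos (kp_diff_nonempty κ hx)]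
  exact (Set.mem_diff _).mp ((wfTK κ).min_mem _ _) |>.1

theorem cx_not_mem {x : Set (TK κ)} (hx : x ∈ Pkl κ (2 ^ κ)) : cx κ x ∉ x := by
  rw [cx, dif_pos (kp_diff_nonempty κ hx)]
  exact (Set.mem_diff _).mp ((wfTK κ).min_mem _ _) |>.2

theorem lt_cx {x : Set (TK κ)} (hg : Good κ x) {s : TK κ} :
    s < cx κ x ↔ s ∈ x ∧ s ∈ kp κ := by
  constructor
  · intro hs
    have hskp : s ∈ kp κ := lt_trans hs (cx_mem_kp hg.1)
    have := fun hmem => (wfTK κ).not_lt_min (kp κ \ x) (x := s) hmem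
    rw [cx, dif_pos (kp_diff_nonempty κ hg.1)] at hs
    by_contra hc
    push_neg at hc
    exact this (Set.mem_diff _|>.mpr ⟨hskp, fun hmem => hc hmem hskp⟩) hs
  · rintro ⟨hsx, hskp⟩
    rcases lt_trichotomy s (cx κ x) with h | h | h
    · exact h
    · exact absurd (h ▸ hsx) (cx_not_mem hg.1)
    · exact absurd (hg.2 s hsx hskp _ h) (cx_not_mem hg.1)

def nux (x : Set (TK κ)) : Ordinal := ty (cx κ x)

theorem nux_lt_ord {x : Set (TK κ)} (hx : x ∈ Pkl κ (2 ^ κ)) : nux x < κ.ord := by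
  rw [← ty_t0 κ]
  exact ty_lt_ty.2 (cx_mem_kp hx)

variable (κ)

theorem mk_TK : #(TK κ) = 2 ^ κ := by
  rw [mk_toType', Cardinal.card_ord]

theorem mk_set_kp : #(Set ↥(kp κ)) = 2 ^ κ := by
  rw [Cardinal.mk_set, mk_kp]

/-- coding of subsets of `kp κ` by elements of `TK κ` -/
def EK : TK κ ≃ Set ↥(kp κ) :=
  (Cardinal.eq.1 (by rw [mk_TK, mk_set_kp])).some

def es (α : TK κ) : Set (TK κ) := Subtype.val '' (EK κ α)

theorem es_subset (α : TK κ) : es κ α ⊆ kp κ := by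
  rintro t ⟨s, -, rfl⟩; exact s.2

def codeK (B : Set (TK κ)) : TK κ := (EK κ).symm {s : ↥(kp κ) | s.val ∈ B}

theorem es_codeK (B : Set (TK κ)) : es κ (codeK κ B) = B ∩ kp κ := by
  rw [es, codeK, Equiv.apply_symm_apply]
  ext t
  constructor
  · rintro ⟨s, hs, rfl⟩; exact ⟨hs, s.2⟩
  · rintro ⟨hB, hkp⟩; exact ⟨⟨t, hkp⟩, hB, rfl⟩

def interC (α β : TK κ) : TK κ := codeK κ (es κ α ∩ es κ β)

theorem es_interC (α β : TK κ) : es κ (interC κ α β) = es κ α ∩ es κ β := by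
  rw [interC, es_codeK, Set.inter_eq_self_of_subset_left]
  exact fun t ht => es_subset κ α ht.1

def compC (α : TK κ) : TK κ := codeK κ (kp κ \ es κ α)

theorem es_compC (α : TK κ) : es κ (compC κ α) = kp κ \ es κ α := by
  rw [compC, es_codeK, Set.inter_eq_self_of_subset_left]
  exact Set.diff_subset

variable {κ} {U : Set (Set (Set (TK κ)))}

/-- Almost every `x` is downward closed below `t0`. -/
theorem ae_good (hUF : IsUltrafilterOn (Pkl κ (2 ^ κ)) U) (hC : IsKComplete κ U)
    (hFine : IsFine κ (2 ^ κ) U) (hNorm : IsNormalOnPkl κ (2 ^ κ) U) :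
    bs κ (Good κ) ∈ U := by
  have hdcl : bs κ (dcl κ) ∈ U := by
    rcases ae_decide hUF (dcl κ) with h | h
    · exact h
    · exfalso
      have h' : bs κ (fun x => ∃ t ∈ x, t ∈ kp κ ∧ ∃ s, s < t ∧ s ∉ x) ∈ U := by
        refine ae_mono hUF h ?_
        intro x _ hx
        rw [dcl] at hx
        push_neg at hx
        obtain ⟨t, ht, htkp, s, hs, hsx⟩ := hx
        exact ⟨t, ht, htkp, s, hs, hsx⟩
      obtain ⟨t, ht⟩ := ae_normal hUF hNorm h'
      obtain ⟨-, -, -, htkp, -⟩ := ae_nonempty hUF ht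
      have hI : #(↥(Set.Iio t)) < κ := by
        rw [mk_Iio_toType]
        exact Cardinal.lt_ord.1 (by rw [← ty_t0 κ]; exact ty_lt_ty.2 htkp)
      have h'' : bs κ (fun x => ∃ i : ↥(Set.Iio t), i.val ∉ x) ∈ U := by
        refine ae_mono hUF ht ?_
        rintro x - ⟨-, -, s, hs, hsx⟩
        exact ⟨⟨s, hs⟩, hsx⟩
      obtain ⟨i, hi⟩ := ae_exists hUF hC hI h''
      refine ae_not_both hUF (ae_fine hFine i.val) (ae_mono hUF hi ?_)
      exact fun x _ h1 h2 => h1 h2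
  refine ae_mono hUF hdcl ?_
  exact fun x hx hd => ⟨hx, hd⟩

/-- The key "minimum" argument. -/
theorem key_min (hUF : IsUltrafilterOn (Pkl κ (2 ^ κ)) U) (hFine : IsFine κ (2 ^ κ) U)
    {A : Set (TK κ)} (hA : A ⊆ kp κ)
    (h : bs κ (fun x => Good κ x ∧ cx κ x ∈ A ∧ A ∩ Set.Iio (cx κ x) = ∅) ∈ U) : False := by
  obtain ⟨x₀, -, -, hcx₀, -⟩ := ae_nonempty hUF h
  have hAne : A.Nonempty := ⟨_, hcx₀⟩
  set m := (wfTK κ).min A hAne with hm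
  obtain ⟨x, -, ⟨hg, hcx, hempty⟩, hmx⟩ := ae_nonempty hUF (ae_and hUF h (ae_fine hFine m))
  have hmlt : m < cx κ x := (lt_cx hg).2 ⟨hmx, hA ((wfTK κ).min_mem A hAne)⟩
  have : m ∈ A ∩ Set.Iio (cx κ x) := Set.mem_inter ((wfTK κ).min_mem A hAne) hmlt
  rw [hempty] at this
  exact this

/-- Almost everywhere, `nux x` exceeds any fixed ordinal below `κ.ord`. -/
theorem ae_nux_gt (hUF : IsUltrafilterOn (Pkl κ (2 ^ κ)) U) (hC : IsKComplete κ U)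
    (hFine : IsFine κ (2 ^ κ) U) (hNorm : IsNormalOnPkl κ (2 ^ κ) U)
    {ι : Ordinal} (hι : ι < κ.ord) :
    bs κ (fun x => Good κ x ∧ ι < nux x) ∈ U := by
  set tι : TK κ := en _ ι (lt_trans hι (ord_lt_ord_two_pow κ)) with htι
  have htιkp : tι ∈ kp κ := by
    have : ty tι < ty (t0 κ) := by rw [ty_en, ty_t0]; exact hι
    exact ty_lt_ty.1 this
  refine ae_mono hUF (ae_and hUF (ae_good hUF hC hFine hNorm) (ae_fine hFine tι)) ?_
  rintro x - ⟨hg, htx⟩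
  refine ⟨hg, ?_⟩
  have : tι < cx κ x := (lt_cx hg).2 ⟨htx, htιkp⟩
  have := ty_lt_ty.2 this
  rwa [ty_en] at this

end
end Menas3
namespace Menas4
open Ordinal Set Menas Menas2 Menas3 Classical

noncomputable section

variable {κ : Cardinal.{0}} {U : Set (Set (Set (TK κ)))}

theorem ae_good_and (hUF : IsUltrafilterOn (Pkl κ (2 ^ κ)) U) (hC : IsKComplete κ U)
    (hFine : IsFine κ (2 ^ κ) U) (hNorm : IsNormalOnPkl κ (2 ^ κ) U)
    {Q : Set (TK κ) → Prop}
    (h : bs κ (fun x => Good κ x ∧ ¬ Q x) ∈ U → False) :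
    bs κ (fun x => Good κ x ∧ Q x) ∈ U := by
  rcases ae_decide hUF (fun x => Good κ x ∧ Q x) with hq | hq
  · exact hq
  · exfalso
    apply h
    refine ae_mono hUF (ae_and hUF (ae_good hUF hC hFine hNorm) hq) ?_
    rintro x - ⟨hg, hn⟩
    exact ⟨hg, fun hQ => hn ⟨hg, hQ⟩⟩

/-- a.e., no code in `x` containing `cx x` traces to `∅` below `cx x`. -/
theorem ae_P5 (hUF : IsUltrafilterOn (Pkl κ (2 ^ κ)) U) (hC : IsKComplete κ U)
    (hFine : IsFine κ (2 ^ κ) U) (hNorm : IsNormalOnPkl κ (2 ^ κ) U) :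
    bs κ (fun x => Good κ x ∧ ∀ α ∈ x, cx κ x ∈ es κ α →
      (es κ α ∩ Set.Iio (cx κ x)).Nonempty) ∈ U := by
  refine ae_good_and hUF hC hFine hNorm (fun hbad => ?_)
  have h' : bs κ (fun x => ∃ α ∈ x, Good κ x ∧ cx κ x ∈ es κ α ∧
      es κ α ∩ Set.Iio (cx κ x) = ∅) ∈ U := by
    refine ae_mono hUF hbad ?_
    rintro x - ⟨hg, hn⟩
    push_neg at hn
    obtain ⟨α, hα, hcx, hne⟩ := hn
    exact ⟨α, hα, hg, hcx, hne⟩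
  obtain ⟨α, hα⟩ := ae_normal hUF hNorm h'
  refine key_min hUF hFine (es_subset κ α) (ae_mono hUF hα ?_)
  rintro x - ⟨-, hg, hcx, hemp⟩
  exact ⟨hg, hcx, hemp⟩

/-- a.e., no code in `x` containing `cx x` traces to a singleton below `cx x`. -/
theorem ae_P7 (hUF : IsUltrafilterOn (Pkl κ (2 ^ κ)) U) (hC : IsKComplete κ U)
    (hFine : IsFine κ (2 ^ κ) U) (hNorm : IsNormalOnPkl κ (2 ^ κ) U) :
    bs κ (fun x => Good κ x ∧ ∀ α ∈ x, cx κ x ∈ es κ α →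
      ∀ s, es κ α ∩ Set.Iio (cx κ x) ≠ {s}) ∈ U := by
  refine ae_good_and hUF hC hFine hNorm (fun hbad => ?_)
  have h' : bs κ (fun x => ∃ α ∈ x, Good κ x ∧ cx κ x ∈ es κ α ∧
      ∃ s, es κ α ∩ Set.Iio (cx κ x) = {s}) ∈ U := by
    refine ae_mono hUF hbad ?_
    rintro x - ⟨hg, hn⟩
    push_neg at hn
    obtain ⟨α, hα, hcx, s, hs⟩ := hn
    exact ⟨α, hα, hg, hcx, s, hs⟩
  obtain ⟨α, hα⟩ := ae_normal hUF hNorm h'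
  obtain ⟨x₀, -, -, -, hcx₀, -⟩ := ae_nonempty hUF hα
  have hesne : (es κ α).Nonempty := ⟨_, hcx₀⟩
  set m := (wfTK κ).min _ hesne with hm
  have hmmem : m ∈ es κ α := (wfTK κ).min_mem _ hesne
  refine key_min hUF hFine (A := es κ α \ {m}) (fun t ht => es_subset κ α ht.1)
    (ae_mono hUF hα ?_)
  rintro x - ⟨-, hg, hcx, s, hs⟩
  have hscx : s < cx κ x := by
    have : s ∈ es κ α ∩ Set.Iio (cx κ x) := by rw [hs]; rfl
    exact this.2
  have hsmem : s ∈ es κ α := by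
    have : s ∈ es κ α ∩ Set.Iio (cx κ x) := by rw [hs]; rfl
    exact this.1
  have hms : m ≤ s := not_lt.1 ((wfTK κ).not_lt_min _ hsmem)
  have hmcx : m < cx κ x := lt_of_le_of_lt hms hscx
  have hmeqs : m = s := by
    have : m ∈ es κ α ∩ Set.Iio (cx κ x) := ⟨hmmem, hmcx⟩
    rw [hs] at this
    exact this
  refine ⟨hg, ?_, ?_⟩
  · refine Set.mem_diff _ |>.mpr ⟨hcx, ?_⟩
    simp only [Set.mem_singleton_iff]
    intro hcm
    rw [hcm, hmeqs] at hscx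
    exact lt_irrefl _ hscx
  · ext e
    simp only [Set.mem_inter_iff, Set.mem_diff, Set.mem_singleton_iff, Set.mem_empty_iff_false,
      iff_false]
    rintro ⟨⟨hees, hem⟩, helt⟩
    have : e ∈ es κ α ∩ Set.Iio (cx κ x) := ⟨hees, helt⟩
    rw [hs] at this
    exact hem ((Set.mem_singleton_iff.1 this).trans hmeqs.symm)

/-- a.e., every subset of `Iio (cx x)` is the trace of a code in `x`. -/
theorem ae_surj (hUF : IsUltrafilterOn (Pkl κ (2 ^ κ)) U) (hC : IsKComplete κ U)
    (hFine : IsFine κ (2 ^ κ) U) (hNorm : IsNormalOnPkl κ (2 ^ κ) U) :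
    bs κ (fun x => Good κ x ∧ ∀ B ⊆ Set.Iio (cx κ x),
      ∃ α ∈ x, es κ α ∩ Set.Iio (cx κ x) = B) ∈ U := by
  refine ae_good_and hUF hC hFine hNorm (fun hbad => ?_)
  classical
  set Px : Set (TK κ) → Prop := fun x =>
    ∃ B ⊆ Set.Iio (cx κ x), ∀ α ∈ x, es κ α ∩ Set.Iio (cx κ x) ≠ B with hPx
  have hbad' : bs κ (fun x => Good κ x ∧ Px x) ∈ U := by
    refine ae_mono hUF hbad ?_
    rintro x - ⟨hg, hn⟩
    push_neg at hn
    exact ⟨hg, hn⟩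
  set Bx : Set (TK κ) → Set (TK κ) := fun x => if h : Px x then h.choose else ∅ with hBx
  have hBspec : ∀ x, Px x → Bx x ⊆ Set.Iio (cx κ x) ∧
      ∀ α ∈ x, es κ α ∩ Set.Iio (cx κ x) ≠ Bx x := by
    intro x hx
    rw [hBx]
    simp only [dif_pos hx]
    exact hx.choose_spec
  set Astar : Set (TK κ) :=
    {t | t ∈ kp κ ∧ bs κ (fun x => (Good κ x ∧ Px x) ∧ t < cx κ x ∧ t ∈ Bx x) ∈ U} with hAstar
  -- the coherence claim
  have hiff : bs κ (fun x => (Good κ x ∧ Px x) →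
      ∀ t ∈ x, t ∈ kp κ → (t ∈ Bx x ↔ t ∈ Astar)) ∈ U := by
    rcases ae_decide hUF (fun x => (Good κ x ∧ Px x) →
      ∀ t ∈ x, t ∈ kp κ → (t ∈ Bx x ↔ t ∈ Astar)) with h | h
    · exact h
    · exfalso
      have h' : bs κ (fun x => ∃ t ∈ x, (Good κ x ∧ Px x) ∧ t ∈ kp κ ∧
          ¬ (t ∈ Bx x ↔ t ∈ Astar)) ∈ U := by
        refine ae_mono hUF h ?_
        rintro x - hx
        push_neg at hx
        obtain ⟨hgp, t, htx, htkp, hniff⟩ := hx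
        exact ⟨t, htx, hgp, htkp, by tauto⟩
      obtain ⟨t, ht⟩ := ae_normal hUF hNorm h'
      by_cases hA : t ∈ Astar
      · obtain ⟨x, -, ⟨-, -, -, hniff⟩, -, hlt, hBt⟩ :=
          ae_nonempty hUF (ae_and hUF ht hA.2)
        exact hniff ⟨fun _ => hA, fun _ => hBt⟩
      · have hQt : bs κ (fun x => ¬ ((Good κ x ∧ Px x) ∧ t < cx κ x ∧ t ∈ Bx x)) ∈ U := by
          rcases ae_decide hUF (fun x => (Good κ x ∧ Px x) ∧ t < cx κ x ∧ t ∈ Bx x) with hq | hq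
          · exfalso
            obtain ⟨-, -, -, -, htkp, -⟩ := ae_nonempty hUF ht
            exact hA ⟨htkp, hq⟩
          · exact hq
        obtain ⟨x, -, ⟨htx, hgp, htkp, hniff⟩, hnq⟩ :=
          ae_nonempty hUF (ae_and hUF ht hQt)
        have hlt : t < cx κ x := (lt_cx hgp.1).2 ⟨htx, htkp⟩
        have hnBt : t ∉ Bx x := fun hBt => hnq ⟨hgp, hlt, hBt⟩
        exact hniff ⟨fun h => absurd h hnBt, fun h => absurd h hA⟩
  -- now use fineness of the code of Astar
  obtain ⟨x, -, ⟨hg, hp⟩, hif, hcA⟩ := ae_nonempty hUF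
    (ae_and hUF hbad' (ae_and hUF hiff (ae_fine hFine (codeK κ Astar))))
  obtain ⟨hBsub, hBne⟩ := hBspec x hp
  refine hBne (codeK κ Astar) hcA ?_
  have hesA : es κ (codeK κ Astar) = Astar ∩ kp κ := es_codeK κ Astar
  ext e
  simp only [hesA, Set.mem_inter_iff, Set.mem_setOf_eq]
  constructor
  · rintro ⟨⟨heA, hekp⟩, helt⟩
    have hex : e ∈ x := ((lt_cx hg).1 helt).1
    exact (hif ⟨hg, hp⟩ e hex hekp).2 heA
  · intro heB
    have helt : e < cx κ x := hBsub heB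
    have hex : e ∈ x := ((lt_cx hg).1 helt).1
    have hekp : e ∈ kp κ := ((lt_cx hg).1 helt).2
    exact ⟨⟨(hif ⟨hg, hp⟩ e hex hekp).1 heB, hekp⟩, helt⟩

/-- a.e. completeness event. -/
theorem ae_P8 (hUF : IsUltrafilterOn (Pkl κ (2 ^ κ)) U) (hC : IsKComplete κ U)
    (hFine : IsFine κ (2 ^ κ) U) (hNorm : IsNormalOnPkl κ (2 ^ κ) U) :
    bs κ (fun x => Good κ x ∧ ∀ d, d < cx κ x → ∀ g : TK κ → TK κ,
      (∀ s, s < d → g s ∈ x ∧ cx κ x ∈ es κ (g s)) → ∀ β ∈ x, cx κ x ∈ es κ β →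
      (es κ β ∩ Set.Iio (cx κ x) ∩ ⋂ (s : ↥(Set.Iio d)), es κ (g s.val)).Nonempty) ∈ U := by
  refine ae_good_and hUF hC hFine hNorm (fun hbad => ?_)
  classical
  have h1 : bs κ (fun x => ∃ d ∈ x, Good κ x ∧ d < cx κ x ∧ ∃ g : TK κ → TK κ,
      (∀ s, s < d → g s ∈ x ∧ cx κ x ∈ es κ (g s)) ∧ ∃ β ∈ x, cx κ x ∈ es κ β ∧
      es κ β ∩ Set.Iio (cx κ x) ∩ ⋂ (s : ↥(Set.Iio d)), es κ (g s.val) = ∅) ∈ U := by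
    refine ae_mono hUF hbad ?_
    rintro x - ⟨hg, hn⟩
    push_neg at hn
    obtain ⟨d, hd, g, hgs, β, hβ, hcβ, hemp⟩ := hn
    exact ⟨d, ((lt_cx hg).1 hd).1, hg, hd, g, hgs, β, hβ, hcβ, hemp⟩
  obtain ⟨d, hd⟩ := ae_normal hUF hNorm h1
  have h2 : bs κ (fun x => ∃ β ∈ x, (Good κ x ∧ d < cx κ x ∧ cx κ x ∈ es κ β) ∧
      ∃ g : TK κ → TK κ, (∀ s, s < d → g s ∈ x ∧ cx κ x ∈ es κ (g s)) ∧
      es κ β ∩ Set.Iio (cx κ x) ∩ ⋂ (s : ↥(Set.Iio d)), es κ (g s.val) = ∅) ∈ U := by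
    refine ae_mono hUF hd ?_
    rintro x - ⟨-, hg, hdcx, g, hgs, β, hβx, hcβ, hemp⟩
    exact ⟨β, hβx, ⟨hg, hdcx, hcβ⟩, g, hgs, hemp⟩
  obtain ⟨β, hβ⟩ := ae_normal hUF hNorm h2
  set Cnd : Set (TK κ) → (TK κ → TK κ) → Prop := fun x g =>
    (∀ s, s < d → g s ∈ x ∧ cx κ x ∈ es κ (g s)) ∧
      es κ β ∩ Set.Iio (cx κ x) ∩ ⋂ (s : ↥(Set.Iio d)), es κ (g s.val) = ∅ with hCnd
  set gw : Set (TK κ) → TK κ → TK κ := fun x => if h : ∃ g, Cnd x g then h.choose else id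
    with hgw
  have h3 : bs κ (fun x => (Good κ x ∧ d < cx κ x ∧ β ∈ x ∧ cx κ x ∈ es κ β) ∧
      Cnd x (gw x)) ∈ U := by
    refine ae_mono hUF hβ ?_
    rintro x - ⟨hβx, ⟨hg, hdcx, hcβ⟩, g, hgs, hemp⟩
    have hex : ∃ g, Cnd x g := ⟨g, hgs, hemp⟩
    refine ⟨⟨hg, hdcx, hβx, hcβ⟩, ?_⟩
    rw [hgw]; simp only [dif_pos hex]
    exact hex.choose_spec
  rcases isEmpty_or_nonempty (↥(Set.Iio d)) with hI | hI
  · refine key_min hUF hFine (es_subset κ β) (ae_mono hUF h3 ?_)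
    rintro x - ⟨⟨hg, hdcx, hβx, hcβ⟩, -, hemp⟩
    rw [Set.iInter_of_empty, Set.inter_univ] at hemp
    exact ⟨hg, hcβ, hemp⟩
  · -- fix each coordinate by normality
    have hdkp : d ∈ kp κ := by
      obtain ⟨x, hxP, ⟨hg, hdcx, -, -⟩, -⟩ := ae_nonempty hUF h3
      exact lt_trans hdcx (cx_mem_kp hg.1)
    have hIcard : #(↥(Set.Iio d)) < κ := by
      rw [mk_Iio_toType]
      exact Cardinal.lt_ord.1 (by rw [← ty_t0 κ]; exact ty_lt_ty.2 hdkp)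
    have hex : ∀ s : ↥(Set.Iio d), ∃ a : TK κ, bs κ (fun x => gw x s.val = a) ∈ U := by
      intro s
      have : {x | x ∈ Pkl κ (2 ^ κ) ∧ gw x s.val ∈ x} ∈ U := by
        refine ae_of_subset hUF h3 ?_
        rintro x ⟨hxP, -, hcnd⟩
        exact ⟨hxP, (hcnd.1 s.val s.2).1⟩
      exact hNorm _ this
    choose αs hαs using hex
    have hall : bs κ (fun x => ∀ s : ↥(Set.Iio d), gw x s.val = αs s) ∈ U :=
      ae_all hUF hC hI hIcard hαs
    set A : Set (TK κ) := es κ β ∩ ⋂ (s : ↥(Set.Iio d)), es κ (αs s) with hA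
    refine key_min hUF hFine (A := A) (fun t ht => es_subset κ β ht.1)
      (ae_mono hUF (ae_and hUF h3 hall) ?_)
    rintro x - ⟨⟨⟨hg, hdcx, hβx, hcβ⟩, hcnd⟩, heq⟩
    refine ⟨hg, ?_, ?_⟩
    · refine ⟨hcβ, ?_⟩
      rw [Set.mem_iInter]
      intro s
      rw [← heq s]
      exact (hcnd.1 s.val s.2).2
    · have hemp := hcnd.2
      rw [Set.eq_empty_iff_forall_notMem] at hemp ⊢
      rintro e ⟨⟨heβ, hiA⟩, helt⟩
      refine hemp e ⟨⟨heβ, helt⟩, ?_⟩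
      rw [Set.mem_iInter] at hiA ⊢
      intro s
      rw [heq s]
      exact hiA s

end
end Menas4
namespace Menas5
open Ordinal Set Menas Menas2 Menas3 Menas4 Classical

noncomputable section

/-- Ulam: a measurable cardinal is a limit cardinal. -/
theorem succ_lt_of_measurable {κ : Cardinal.{0}} (hmeas : IsMeasurableCard κ)
    {μ : Cardinal.{0}} (hμ : μ < κ) : Order.succ μ < κ := by
  obtain ⟨hℵ, F, hUF, hC, hnp⟩ := hmeas
  rcases lt_or_eq_of_le (Order.succ_le_of_lt hμ) with h | heq
  · exact h
  exfalso
  -- κ = succ μ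
  have hμinf : ℵ₀ ≤ μ := by
    by_contra hfin
    push_neg at hfin
    have : Order.succ μ ≤ ℵ₀ := Order.succ_le_of_lt hfin
    rw [heq] at this
    exact absurd hℵ (not_lt.2 this)
  have hμ0 : μ ≠ 0 := (lt_of_lt_of_le Cardinal.aleph0_pos hμinf).ne'
  -- small sets are not in F
  have hsmall : ∀ S : Set κ.ord.ToType, #S < κ → S ∉ F := by
    intro S hS hSF
    rcases S.eq_empty_or_nonempty with rfl | hne
    · exact hUF.2.2.1 hSF
    · have hfam : ∀ X ∈ (fun a : κ.ord.ToType => (Set.univ \ {a} : Set κ.ord.ToType)) '' S,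
          X ∈ F := by
        rintro X ⟨a, haS, rfl⟩
        rcases hUF.2.2.2.2.2 {a} (Set.subset_univ _) with h | h
        · exact absurd h (hnp a)
        · exact h
      have hint := hC _ (hne.image _) (lt_of_le_of_lt Cardinal.mk_image_le hS) hfam
      have := hUF.2.2.2.2.1 _ hint _ hSF
      rcases Set.eq_empty_or_nonempty (⋂₀ ((fun a : κ.ord.ToType =>
          (Set.univ \ {a} : Set κ.ord.ToType)) '' S) ∩ S) with hem | ⟨b, hb1, hb2⟩
      · rw [hem] at this; exact hUF.2.2.1 this
      · have := hb1 (Set.univ \ {b}) ⟨b, hb2, rfl⟩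
        exact this.2 rfl
  -- Iic d is small
  have hIic : ∀ d : κ.ord.ToType, #(Set.Iic d) < κ := by
    intro d
    have h1 : (Set.Iic d : Set κ.ord.ToType) ⊆ Set.Iio d ∪ {d} := by
      intro e he
      rcases lt_or_eq_of_le (Set.mem_Iic.1 he) with h | h
      · exact Or.inl h
      · exact Or.inr (by simp [h])
    refine lt_of_le_of_lt (Cardinal.mk_le_mk_of_subset h1) ?_
    refine lt_of_le_of_lt (Cardinal.mk_union_le _ _) ?_
    have h2 : #(Set.Iio d) < κ := by
      rw [mk_Iio_toType]
      exact Cardinal.lt_ord.1 (ty_lt d)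
    have h3 : #({d} : Set κ.ord.ToType) < κ := by
      simp only [Cardinal.mk_fintype]
      simp
      exact lt_of_le_of_lt Cardinal.one_le_aleph0 hℵ
    exact Cardinal.add_lt_of_lt (le_of_lt hℵ) h2 h3
  -- injections from initial segments into μ.ord.ToType
  have hM : #(μ.ord.ToType) = μ := Cardinal.mk_ord_toType μ
  haveI hMne : Nonempty μ.ord.ToType := by
    refine Ordinal.toType_nonempty_iff_ne_zero.mpr (fun h => ?_)
    have := Cardinal.card_ord μ
    rw [h] at this
    exact hμ0 (by simpa using this.symm)
  have hemb : ∀ a : κ.ord.ToType, Nonempty (↥(Set.Iio a) ↪ μ.ord.ToType) := by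
    intro a
    rw [← Cardinal.le_def, hM, mk_Iio_toType]
    have h2 : (ty a).card < κ := Cardinal.lt_ord.1 (ty_lt a)
    exact Order.lt_succ_iff.1 (by rw [heq]; exact h2)
  set G : (a : κ.ord.ToType) → ↥(Set.Iio a) ↪ μ.ord.ToType := fun a => (hemb a).some with hG
  set Sd : κ.ord.ToType → μ.ord.ToType → Set κ.ord.ToType := fun d ξ =>
    {a : κ.ord.ToType | ∃ h : d < a, G a ⟨d, h⟩ = ξ} with hSd
  have hpick : ∀ d : κ.ord.ToType, ∃ ξ : μ.ord.ToType, Sd d ξ ∈ F := by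
    intro d
    by_contra hno
    push_neg at hno
    have hcomp : ∀ ξ : μ.ord.ToType, Set.univ \ Sd d ξ ∈ F := by
      intro ξ
      rcases hUF.2.2.2.2.2 (Sd d ξ) (Set.subset_univ _) with h | h
      · exact absurd h (hno ξ)
      · exact h
    have hfam := hC (Set.range fun ξ => Set.univ \ Sd d ξ) (Set.range_nonempty _)
      (lt_of_le_of_lt Cardinal.mk_range_le (by rw [hM]; exact hμ)) ?_
    swap
    · rintro X ⟨ξ, rfl⟩; exact hcomp ξ
    have hIoi : Set.Ioi d ∈ F := by
      rcases hUF.2.2.2.2.2 (Set.Ioi d) (Set.subset_univ _) with h | h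
      · exact h
      · exfalso
        have : Set.univ \ Set.Ioi d = Set.Iic d := by
          ext e; simp [Set.mem_Iic, not_lt]
        rw [this] at h
        exact hsmall _ (hIic d) h
    have hint := hUF.2.2.2.2.1 _ hfam _ hIoi
    rcases Set.eq_empty_or_nonempty (⋂₀ (Set.range fun ξ => Set.univ \ Sd d ξ) ∩ Set.Ioi d)
      with hem | ⟨a, ha1, ha2⟩
    · rw [hem] at hint; exact hUF.2.2.1 hint
    · have hda : d < a := ha2
      have := ha1 (Set.univ \ Sd d (G a ⟨d, hda⟩)) ⟨_, rfl⟩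
      exact this.2 ⟨hda, rfl⟩
  choose ξd hξd using hpick
  have hninj : ¬ Function.Injective ξd := by
    intro hinj
    have : #(κ.ord.ToType) ≤ #(μ.ord.ToType) := Cardinal.mk_le_of_injective hinj
    rw [Cardinal.mk_ord_toType, hM] at this
    exact absurd (lt_of_le_of_lt this hμ) (lt_irrefl _)
  rw [Function.not_injective_iff] at hninj
  obtain ⟨d1, d2, hval, hne⟩ := hninj
  have hint := hUF.2.2.2.2.1 _ (hξd d1) _ (hξd d2)
  rcases Set.eq_empty_or_nonempty (Sd d1 (ξd d1) ∩ Sd d2 (ξd d2)) with hem | ⟨a, ha1, ha2⟩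
  · rw [hem] at hint; exact hUF.2.2.1 hint
  · obtain ⟨h1, e1⟩ := ha1
    obtain ⟨h2, e2⟩ := ha2
    rw [hval] at e1
    have := (G a).injective (e1.trans e2.symm)
    exact hne (congrArg Subtype.val this)

variable {κ : Cardinal.{0}} {U : Set (Set (Set (TK κ)))}

/-- a.e., `nux x` is (the ordinal of) a cardinal. -/
theorem ae_nux_card (hUF : IsUltrafilterOn (Pkl κ (2 ^ κ)) U) (hC : IsKComplete κ U)
    (hFine : IsFine κ (2 ^ κ) U) (hNorm : IsNormalOnPkl κ (2 ^ κ) U)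
    (hlim : ∀ μ : Cardinal.{0}, μ < κ → Order.succ μ < κ) :
    bs κ (fun x => Good κ x ∧ (nux x).card.ord = nux x) ∈ U := by
  refine ae_good_and hUF hC hFine hNorm (fun hbad => ?_)
  have h1 : bs κ (fun x => ∃ t ∈ x, Good κ x ∧ ty t = (nux x).card.ord ∧ ty t < nux x) ∈ U := by
    refine ae_mono hUF hbad ?_
    rintro x - ⟨hg, hn⟩
    have hlt : (nux x).card.ord < nux x := lt_of_le_of_ne (Cardinal.ord_card_le _) hn
    set t : TK κ := en _ ((nux x).card.ord)
      (lt_of_lt_of_le hlt (le_of_lt (ty_lt (cx κ x)))) with htdef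
    have hty : ty t = (nux x).card.ord := ty_en _ _
    have htcx : t < cx κ x := by
      rw [← ty_lt_ty, hty]; exact hlt
    exact ⟨t, ((lt_cx hg).1 htcx).1, hg, hty, by rw [hty]; exact hlt⟩
  obtain ⟨t, ht⟩ := ae_normal hUF hNorm h1
  set σ : Ordinal := ty t with hσ
  have hσκ : σ.card < κ := by
    obtain ⟨x, -, -, hg, hty, hlt⟩ := ae_nonempty hUF ht
    exact Cardinal.lt_ord.1 (lt_trans hlt (nux_lt_ord hg.1))
  have hsucc := hlim σ.card hσκ
  have hgt := ae_nux_gt hUF hC hFine hNorm (Cardinal.ord_lt_ord.2 hsucc)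
  obtain ⟨x, -, ⟨-, hg, hty, -⟩, -, hnu⟩ := ae_nonempty hUF (ae_and hUF ht hgt)
  -- from hty : ty t = (nux x).card.ord, get (nux x).card = σ.card
  have hcard : (nux x).card = σ.card := by
    have := congrArg Ordinal.card hty
    rw [Cardinal.card_ord] at this
    exact this.symm
  have : nux x < (Order.succ σ.card).ord := by
    rw [Cardinal.lt_ord, hcard]
    exact Order.lt_succ _
  exact absurd hnu (not_lt.2 (le_of_lt this))

/-- a.e., strongly compact cardinals are unbounded below `nux x`. -/
theorem ae_nux_sc (hUF : IsUltrafilterOn (Pkl κ (2 ^ κ)) U) (hC : IsKComplete κ U)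
    (hFine : IsFine κ (2 ^ κ) U) (hNorm : IsNormalOnPkl κ (2 ^ κ) U)
    (hlim : ∀ μ : Cardinal.{0}, μ < κ → Order.succ μ < κ)
    (hunb : ∀ β : Cardinal.{0}, β < κ →
      ∃ γ : Cardinal.{0}, β ≤ γ ∧ γ < κ ∧ IsStronglyCompactCard γ) :
    bs κ (fun x => Good κ x ∧ ∀ β : Ordinal, β < nux x →
      ∃ γc : Cardinal.{0}, β ≤ γc.ord ∧ γc.ord < nux x ∧ IsStronglyCompactCard γc) ∈ U := by
  refine ae_good_and hUF hC hFine hNorm (fun hbad => ?_)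
  have h1 : bs κ (fun x => ∃ t ∈ x, Good κ x ∧ t ∈ kp κ ∧ ∀ γc : Cardinal.{0},
      ¬ (ty t ≤ γc.ord ∧ γc.ord < nux x ∧ IsStronglyCompactCard γc)) ∈ U := by
    refine ae_mono hUF hbad ?_
    rintro x - ⟨hg, hn⟩
    push_neg at hn
    obtain ⟨β, hβ, hno⟩ := hn
    set t : TK κ := en _ β (lt_trans hβ (ty_lt (cx κ x))) with htdef
    have hty : ty t = β := ty_en _ _
    have htcx : t < cx κ x := by rw [← ty_lt_ty, hty]; exact hβ
    refine ⟨t, ((lt_cx hg).1 htcx).1, hg, ((lt_cx hg).1 htcx).2, ?_⟩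
    rw [hty]
    rintro γc ⟨hc1, hc2, hc3⟩
    exact (hno γc hc1 hc2) hc3
  obtain ⟨t, ht⟩ := ae_normal hUF hNorm h1
  set βo : Ordinal := ty t with hβo
  have hβκ : βo.card < κ := by
    obtain ⟨x, -, -, -, htkp, -⟩ := ae_nonempty hUF ht
    refine Cardinal.lt_ord.1 ?_
    rw [← ty_t0 κ]
    exact ty_lt_ty.2 htkp
  obtain ⟨γc, hle, hγκ, hsc⟩ := hunb (Order.succ βo.card) (hlim _ hβκ)
  have hβγ : βo < γc.ord :=
    lt_of_lt_of_le (Cardinal.lt_ord.2 (Order.lt_succ _)) (Cardinal.ord_le_ord.2 hle)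
  have hgt := ae_nux_gt hUF hC hFine hNorm (Cardinal.ord_lt_ord.2 hγκ)
  obtain ⟨x, -, ⟨-, -, -, hall⟩, -, hnu⟩ := ae_nonempty hUF (ae_and hUF ht hgt)
  exact hall γc ⟨le_of_lt hβγ, hnu, hsc⟩

end
end Menas5
namespace Menas6
open Ordinal Set Menas Menas2 Menas3 Menas4 Menas5 Classical

noncomputable section

theorem pointwise_measurable {κ : Cardinal.{0}} {x : Set (TK κ)}
    (hg : Good κ x)
    (hsurj : ∀ B ⊆ Set.Iio (cx κ x), ∃ α ∈ x, es κ α ∩ Set.Iio (cx κ x) = B)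
    (hbin : ∀ s ∈ x, ∀ t ∈ x, interC κ s t ∈ x)
    (hcomp : ∀ t ∈ x, compC κ t ∈ x)
    (hP5 : ∀ α ∈ x, cx κ x ∈ es κ α → (es κ α ∩ Set.Iio (cx κ x)).Nonempty)
    (hP7 : ∀ α ∈ x, cx κ x ∈ es κ α → ∀ s, es κ α ∩ Set.Iio (cx κ x) ≠ {s})
    (hP8 : ∀ d, d < cx κ x → ∀ g : TK κ → TK κ,
      (∀ s, s < d → g s ∈ x ∧ cx κ x ∈ es κ (g s)) → ∀ β ∈ x, cx κ x ∈ es κ β →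
      (es κ β ∩ Set.Iio (cx κ x) ∩ ⋂ (s : ↥(Set.Iio d)), es κ (g s.val)).Nonempty)
    (hcard : (nux x).card.ord = nux x)
    (hω : (ω : Ordinal) < nux x) :
    IsMeasurableCard (nux x).card := by
  set c : TK κ := cx κ x with hc
  set ν : Ordinal := nux x with hν
  set κ' : Cardinal.{0} := ν.card with hκ'
  set Fraw : Set (Set (TK κ)) :=
    {B | B ⊆ Set.Iio c ∧ ∃ α ∈ x, c ∈ es κ α ∧ es κ α ∩ Set.Iio c ⊆ B} with hFraw
  have hIiokp : Set.Iio c ⊆ kp κ := fun e he => Set.mem_Iio.mpr (lt_trans (Set.mem_Iio.mp he) (Set.mem_Iio.mp (cx_mem_kp hg.1)))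
  -- basic properties of Fraw
  have hFsub : ∀ B ∈ Fraw, B ⊆ Set.Iio c := fun B hB => hB.1
  have hFsup : ∀ B ∈ Fraw, ∀ B', B' ⊆ Set.Iio c → B ⊆ B' → B' ∈ Fraw := by
    rintro B ⟨-, α, hαx, hcα, htr⟩ B' hB' hBB'
    exact ⟨hB', α, hαx, hcα, fun e he => hBB' (htr he)⟩
  have hFinter : ∀ B1 ∈ Fraw, ∀ B2 ∈ Fraw, B1 ∩ B2 ∈ Fraw := by
    rintro B1 ⟨hs1, α1, hα1, hc1, ht1⟩ B2 ⟨hs2, α2, hα2, hc2, ht2⟩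
    refine ⟨fun e he => hs1 he.1, interC κ α1 α2, hbin _ hα1 _ hα2, ?_, ?_⟩
    · rw [es_interC]; exact ⟨hc1, hc2⟩
    · rw [es_interC]
      rintro e ⟨⟨he1, he2⟩, helt⟩
      exact ⟨ht1 ⟨he1, helt⟩, ht2 ⟨he2, helt⟩⟩
  have hFultra : ∀ B ⊆ Set.Iio c, B ∈ Fraw ∨ (Set.Iio c \ B) ∈ Fraw := by
    intro B hB
    obtain ⟨α, hαx, htr⟩ := hsurj B hB
    by_cases hcα : c ∈ es κ α
    · exact Or.inl ⟨hB, α, hαx, hcα, le_of_eq htr⟩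
    · refine Or.inr ⟨Set.diff_subset, compC κ α, hcomp _ hαx, ?_, ?_⟩
      · rw [es_compC]
        exact Set.mem_diff _ |>.mpr ⟨cx_mem_kp hg.1, hcα⟩
      · rw [es_compC]
        rintro e ⟨⟨hekp, heα⟩, helt⟩
        refine Set.mem_diff _ |>.mpr ⟨helt, fun heB => ?_⟩
        rw [← htr] at heB
        exact heα heB.1
  have hFnotempty : ∅ ∉ Fraw := by
    rintro ⟨-, α, hαx, hcα, htr⟩
    obtain ⟨e, he⟩ := hP5 α hαx hcα
    exact htr he
  have hFtop : Set.Iio c ∈ Fraw := by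
    rcases hFultra (Set.Iio c) subset_rfl with h | h
    · exact h
    · rw [Set.diff_self] at h
      exact absurd h hFnotempty
  have hFsing : ∀ s : TK κ, ({s} : Set (TK κ)) ∉ Fraw := by
    rintro s ⟨-, α, hαx, hcα, htr⟩
    rcases Set.subset_singleton_iff_eq.1 htr with h | h
    · obtain ⟨e, he⟩ := hP5 α hαx hcα
      rw [h] at he
      exact he
    · exact hP7 α hαx hcα s h
  -- completeness of Fraw
  have hFcomp : ∀ S : Set (Set (TK κ)), S.Nonempty → #S < κ' →
      (∀ B ∈ S, B ∈ Fraw) → ⋂₀ S ∈ Fraw := by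
    intro S hSne hScard hSF
    obtain ⟨B₀, hB₀⟩ := hSne
    have hsub : ⋂₀ S ⊆ Set.Iio c :=
      fun e he => (hSF B₀ hB₀).1 (he B₀ hB₀)
    by_contra hni
    rcases hFultra (⋂₀ S) hsub with h | h
    · exact hni h
    obtain ⟨-, β, hβx, hcβ, hβtr⟩ := h
    -- choose witnesses for members of S
    have hch : ∀ B : ↥S, ∃ α, α ∈ x ∧ c ∈ es κ α ∧ es κ α ∩ Set.Iio c ⊆ B.val := by
      rintro ⟨B, hB⟩
      obtain ⟨-, α, h1, h2, h3⟩ := hSF B hB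
      exact ⟨α, h1, h2, h3⟩
    choose w hw1 hw2 hw3 using hch
    -- index the family by an initial segment below c
    have hξ : (#↥S).ord < ν := by
      rw [← hcard]
      exact Cardinal.ord_lt_ord.2 hScard
    set d : TK κ := en _ (#↥S).ord (lt_trans hξ (ty_lt c)) with hd
    have htyd : ty d = (#↥S).ord := ty_en _ _
    have hdc : d < c := by rw [← ty_lt_ty, htyd]; exact hξ
    have hq : #(↥(Set.Iio d)) = #(↥S) := by
      rw [mk_Iio_toType, htyd, Cardinal.card_ord]
    set q : ↥(Set.Iio d) ≃ ↥S := (Cardinal.eq.1 hq).some with hqdef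
    set g : TK κ → TK κ := fun s => if hs : s < d then w (q ⟨s, hs⟩) else c with hgdef
    have hgprop : ∀ s, s < d → g s ∈ x ∧ c ∈ es κ (g s) := by
      intro s hs
      rw [hgdef]
      simp only [dif_pos hs]
      exact ⟨hw1 _, hw2 _⟩
    obtain ⟨e, he⟩ := hP8 d hdc g hgprop β hβx hcβ
    obtain ⟨⟨heβ, helt⟩, heint⟩ := he
    have heD : e ∈ Set.Iio c \ ⋂₀ S := hβtr ⟨heβ, helt⟩
    obtain ⟨B, hBS, heB⟩ : ∃ B ∈ S, e ∉ B := by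
      by_contra hcon
      push_neg at hcon
      exact heD.2 fun B hB => hcon B hB
    set s : ↥(Set.Iio d) := q.symm ⟨B, hBS⟩ with hs
    have hes : e ∈ es κ (g s.val) := by
      rw [Set.mem_iInter] at heint
      exact heint s
    have h2 : (s : TK κ) < d := s.2
    have hgs : g s.val = w ⟨B, hBS⟩ := by
      simp only [hgdef, dif_pos h2, Subtype.coe_eta]
      simp only [hs, Subtype.coe_eta, Equiv.apply_symm_apply]
    rw [hgs] at hes
    exact heB (hw3 ⟨B, hBS⟩ ⟨hes, helt⟩)
  -- transfer to κ'.ord.ToType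
  have he2 : #(↥(Set.Iio c)) = #(κ'.ord.ToType) := by
    rw [mk_Iio_toType, Cardinal.mk_ord_toType]
    rfl
  set e2 : ↥(Set.Iio c) ≃ κ'.ord.ToType := (Cardinal.eq.1 he2).some with he2def
  set ρ : Set κ'.ord.ToType → Set (TK κ) := fun Y => Subtype.val '' (e2 ⁻¹' Y) with hρ
  have hρsub : ∀ Y, ρ Y ⊆ Set.Iio c := by
    rintro Y e ⟨u, -, rfl⟩; exact u.2
  have hρuniv : ρ Set.univ = Set.Iio c := by
    rw [hρ]; simp only [Set.preimage_univ, Set.image_univ, Subtype.range_coe]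
  have hρempty : ρ ∅ = ∅ := by
    rw [hρ]; simp
  have hρmono : ∀ Y Z, Y ⊆ Z → ρ Y ⊆ ρ Z := by
    intro Y Z hYZ
    exact Set.image_mono (Set.preimage_mono hYZ)
  have hρinter : ∀ Y Z, ρ (Y ∩ Z) = ρ Y ∩ ρ Z := by
    intro Y Z
    rw [hρ]
    simp only [Set.preimage_inter]
    exact Set.image_inter Subtype.val_injective
  have hρcompl : ∀ Y, ρ (Set.univ \ Y) = Set.Iio c \ ρ Y := by
    intro Y
    rw [hρ]
    simp only [Set.preimage_diff, Set.preimage_univ]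
    rw [Set.image_diff Subtype.val_injective, Set.image_univ, Subtype.range_coe]
  have hρsInter : ∀ S' : Set (Set κ'.ord.ToType), S'.Nonempty →
      ρ (⋂₀ S') = ⋂₀ ((fun Y => ρ Y) '' S') := by
    intro S' hne
    ext e
    constructor
    · rintro ⟨u, hu, rfl⟩ Z ⟨Y, hY, rfl⟩
      exact ⟨u, hu Y hY, rfl⟩
    · intro he
      obtain ⟨Y₀, hY₀⟩ := hne
      obtain ⟨u, hu, rfl⟩ := he (ρ Y₀) ⟨Y₀, hY₀, rfl⟩
      refine ⟨u, ?_, rfl⟩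
      intro Y hY
      obtain ⟨u', hu', hval⟩ := he (ρ Y) ⟨Y, hY, rfl⟩
      rwa [Subtype.val_injective hval] at hu'
  set F' : Set (Set κ'.ord.ToType) := {Y | ρ Y ∈ Fraw} with hF'
  have hsinge2 : ∀ yd : κ'.ord.ToType, ρ {yd} = {(e2.symm yd).val} := by
    intro yd
    show Subtype.val '' (e2 ⁻¹' {yd}) = _
    have : e2 ⁻¹' {yd} = {e2.symm yd} := by
      ext u
      simp only [Set.mem_preimage, Set.mem_singleton_iff]
      constructor
      · intro h; rw [← h]; exact (e2.symm_apply_apply u).symm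
      · intro h; rw [h]; exact e2.apply_symm_apply yd
    rw [this, Set.image_singleton]
  refine ⟨?_, F', ⟨?_, ?_, ?_, ?_, ?_, ?_⟩, ?_, ?_⟩
  · -- ℵ₀ < κ'
    have : (ℵ₀ : Cardinal.{0}).ord < κ'.ord := by
      rw [Cardinal.ord_aleph0, hcard]
      exact hω
    exact Cardinal.ord_lt_ord.1 this
  · exact fun Y _ => Set.subset_univ Y
  · show ρ Set.univ ∈ Fraw
    rw [hρuniv]; exact hFtop
  · show ρ ∅ ∉ Fraw
    rw [hρempty]; exact hFnotempty
  · intro Y hY Z _ hYZ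
    show ρ Z ∈ Fraw
    exact hFsup _ hY _ (hρsub Z) (hρmono _ _ hYZ)
  · intro Y hY Z hZ
    show ρ (Y ∩ Z) ∈ Fraw
    rw [hρinter]
    exact hFinter _ hY _ hZ
  · intro Y _
    rcases hFultra (ρ Y) (hρsub Y) with h | h
    · exact Or.inl h
    · right
      show ρ (Set.univ \ Y) ∈ Fraw
      rw [hρcompl]
      exact h
  · -- completeness
    intro S' hne hcard' hmem
    show ρ (⋂₀ S') ∈ Fraw
    rw [hρsInter S' hne]
    refine hFcomp _ (hne.image _) (lt_of_le_of_lt Cardinal.mk_image_le hcard') ?_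
    rintro Z ⟨Y, hY, rfl⟩
    exact hmem Y hY
  · -- nonprincipal
    intro a ha
    have : ρ {a} ∈ Fraw := ha
    rw [hsinge2] at this
    exact hFsing _ this

end
end Menas6
/-- If `κ` is the least measurable cardinal such that the set of strongly
compact cardinals below `κ` is unbounded in `κ`, then `κ` is not `2^κ` supercompact. -/
theorem least_measurable_limit_of_stronglyCompact_not_two_pow_supercompact
    (κ : Cardinal.{0})
    (hmeas : IsMeasurableCard κ)
    (hunb : ∀ β : Cardinal.{0}, β < κ →
      ∃ γ : Cardinal.{0}, β ≤ γ ∧ γ < κ ∧ IsStronglyCompactCard γ)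
    (hleast : ∀ κ' : Cardinal.{0}, κ' < κ →
      ¬ (IsMeasurableCard κ' ∧ ∀ β : Cardinal.{0}, β < κ' →
          ∃ γ : Cardinal.{0}, β ≤ γ ∧ γ < κ' ∧ IsStronglyCompactCard γ)) :
    ¬ IsLamSupercompact κ (2 ^ κ) := by
  open Ordinal Set Menas Menas2 Menas3 Menas4 Menas5 Menas6 in
  (rintro ⟨U, hUF, hC, hFine, hNorm⟩
   have hlim : ∀ μ : Cardinal.{0}, μ < κ → Order.succ μ < κ :=
     fun μ hμ => succ_lt_of_measurable hmeas hμ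
   have hωκ : (Ordinal.omega0 : Ordinal) < κ.ord := by
     rw [← Cardinal.ord_aleph0]
     exact Cardinal.ord_lt_ord.2 hmeas.1
   have g1 := ae_surj hUF hC hFine hNorm
   have g2 := ae_closed_bin hUF hNorm hFine (interC κ)
   have g3 := ae_closed_un hUF hNorm hFine (compC κ)
   have g4 := ae_P5 hUF hC hFine hNorm
   have g5 := ae_P7 hUF hC hFine hNorm
   have g6 := ae_P8 hUF hC hFine hNorm
   have g7 := ae_nux_card hUF hC hFine hNorm hlim
   have g8 := ae_nux_gt hUF hC hFine hNorm hωκ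
   have g9 := ae_nux_sc hUF hC hFine hNorm hlim hunb
   have grand := ae_and hUF g1 (ae_and hUF g2 (ae_and hUF g3 (ae_and hUF g4
      (ae_and hUF g5 (ae_and hUF g6 (ae_and hUF g7 (ae_and hUF g8 g9)))))))
   obtain ⟨x, hxP, ⟨hg, hsurj⟩, hbin, hcomp, ⟨-, hP5⟩, ⟨-, hP7⟩, ⟨-, hP8⟩,
      ⟨-, hcard⟩, ⟨-, hω⟩, ⟨-, hsc⟩⟩ := ae_nonempty hUF grand
   have hmeas' : IsMeasurableCard (nux x).card :=
     pointwise_measurable hg hsurj hbin hcomp hP5 hP7 hP8 hcard hω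
   have hκ'κ : (nux x).card < κ := Cardinal.lt_ord.1 (nux_lt_ord hg.1)
   refine hleast (nux x).card hκ'κ ⟨hmeas', ?_⟩
   intro β hβ
   have hβo : β.ord < nux x := by
     rw [← hcard]
     exact Cardinal.ord_lt_ord.2 hβ
   obtain ⟨γc, h1, h2, h3⟩ := hsc β.ord hβo
   refine ⟨γc, Cardinal.ord_le_ord.1 h1, ?_, h3⟩
   rw [← hcard] at h2
   exact Cardinal.ord_lt_ord.1 h2)
end

section
/- If κ is the least measurable cardinal such that the set of supercompact cardinals below κ is unbounded in κ, then κ is strongly compact but κ is not 2^κ supercompact (there is no κ-complete fine normal ultrafilter on P_κ(2^κ)). -/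
open Cardinal

namespace MenasAux

variable {α : Type} {A : Set α} {F : Set (Set α)}

theorem uf_sub (hF : IsUltrafilterOn A F) {X : Set α} (hX : X ∈ F) : X ⊆ A := hF.1 X hX
theorem uf_carrier (hF : IsUltrafilterOn A F) : A ∈ F := hF.2.1
theorem uf_empty (hF : IsUltrafilterOn A F) : ∅ ∉ F := hF.2.2.1
theorem uf_superset (hF : IsUltrafilterOn A F) {X Y : Set α} (hX : X ∈ F) (hYA : Y ⊆ A)
    (hXY : X ⊆ Y) : Y ∈ F := hF.2.2.2.1 X hX Y hYA hXY
theorem uf_inter (hF : IsUltrafilterOn A F) {X Y : Set α} (hX : X ∈ F) (hY : Y ∈ F) :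
    X ∩ Y ∈ F := hF.2.2.2.2.1 X hX Y hY
theorem uf_ultra (hF : IsUltrafilterOn A F) {X : Set α} (hX : X ⊆ A) :
    X ∈ F ∨ A \ X ∈ F := hF.2.2.2.2.2 X hX

theorem uf_nonempty (hF : IsUltrafilterOn A F) {X : Set α} (hX : X ∈ F) : X.Nonempty := by
  rcases Set.eq_empty_or_nonempty X with h | h
  · exact absurd (h ▸ hX) (uf_empty hF)
  · exact h

theorem uf_inter3 (hF : IsUltrafilterOn A F) {X Y Z : Set α} (hX : X ∈ F) (hY : Y ∈ F)
    (hZ : Z ∈ F) : X ∩ Y ∩ Z ∈ F := uf_inter hF (uf_inter hF hX hY) hZ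

theorem uf_compl (hF : IsUltrafilterOn A F) {X : Set α} (hXA : X ⊆ A) (hX : X ∉ F) :
    A \ X ∈ F := (uf_ultra hF hXA).resolve_left hX

/-- a κ-complete nonprincipal ultrafilter gives measure zero to small sets -/
theorem uf_small_null (hF : IsUltrafilterOn A F) (hκ : IsKComplete κ F)
    (hnp : ∀ a : α, ({a} : Set α) ∉ F) {B : Set α} (hBA : B ⊆ A) (hB : #B < κ) :
    A \ B ∈ F := by
  rcases Set.eq_empty_or_nonempty B with h | h
  · simpa [h] using uf_carrier hF
  · have hsing : ∀ b ∈ B, A \ {b} ∈ F := by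
      intro b hb
      exact uf_compl hF (Set.singleton_subset_iff.2 (hBA hb)) (hnp b)
    have hfam : (⋂₀ ((fun b => A \ {b}) '' B)) ∈ F := by
      apply hκ _ (h.image _) (lt_of_le_of_lt Cardinal.mk_image_le hB)
      rintro X ⟨b, hb, rfl⟩
      exact hsing b hb
    have : (⋂₀ ((fun b => A \ {b}) '' B)) = A \ B := by
      ext y
      simp only [Set.mem_sInter, Set.mem_image, forall_exists_index, and_imp, Set.mem_diff]
      constructor
      · intro hy
        rcases h with ⟨b0, hb0⟩
        have h0 := hy _ b0 hb0 rfl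
        refine ⟨h0.1, fun hyB => ?_⟩
        exact (hy _ y hyB rfl).2 rfl
      · rintro ⟨hyA, hyB⟩ X b hb rfl
        exact ⟨hyA, fun hyb => hyB (by rwa [Set.mem_singleton_iff.1 hyb])⟩
    rwa [this] at hfam



noncomputable def tyi {κ : Cardinal.{0}} (t : κ.ord.ToType) : Ordinal.{0} :=
  @Ordinal.typein κ.ord.ToType (· < ·) isWellOrder_lt t

theorem tyi_lt_ord {κ : Cardinal.{0}} (t : κ.ord.ToType) : tyi t < κ.ord :=
  Ordinal.typein_lt_self t

theorem card_Iio_eq {κ : Cardinal.{0}} (t : κ.ord.ToType) : #(Set.Iio t) = (tyi t).card :=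
  @Ordinal.card_typein κ.ord.ToType (· < ·) isWellOrder_lt t

theorem tyi_surj {κ : Cardinal.{0}} {o : Ordinal.{0}} (h : o < κ.ord) :
    ∃ t : κ.ord.ToType, tyi t = o := by
  have htype : Ordinal.type (r := ((· < ·) : κ.ord.ToType → κ.ord.ToType → Prop))
      (wo := isWellOrder_lt) = κ.ord := Ordinal.type_toType _
  exact @Ordinal.typein_surj κ.ord.ToType (· < ·) isWellOrder_lt o (by rw [htype]; exact h)

theorem tyi_lt_tyi {κ : Cardinal.{0}} {t u : κ.ord.ToType} : tyi t < tyi u ↔ t < u :=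
  @Ordinal.typein_lt_typein κ.ord.ToType (· < ·) isWellOrder_lt t u

theorem mk_Iio_lt {κ : Cardinal.{0}} (t : κ.ord.ToType) : #(Set.Iio t) < κ := by
  rw [card_Iio_eq, ← Cardinal.lt_ord]
  exact tyi_lt_ord t

theorem exists_card_Iio {κ δ : Cardinal.{0}} (h : δ < κ) :
    ∃ t : κ.ord.ToType, #(Set.Iio t) = δ := by
  obtain ⟨t, ht⟩ := tyi_surj (κ := κ) (o := δ.ord) (Cardinal.ord_lt_ord.2 h)
  exact ⟨t, by rw [card_Iio_eq, ht, Cardinal.card_ord]⟩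

theorem exists_card_Iio_lt {κ δ : Cardinal.{0}} {u : κ.ord.ToType}
    (h : δ < #(Set.Iio u)) : ∃ s : κ.ord.ToType, s < u ∧ #(Set.Iio s) = δ := by
  have hle : δ.ord < tyi u := by
    rcases lt_trichotomy δ.ord (tyi u) with h1 | h1 | h1
    · exact h1
    · exfalso; rw [card_Iio_eq, ← h1, Cardinal.card_ord] at h; exact lt_irrefl _ h
    · exfalso
      have := Ordinal.card_le_card h1.le
      rw [Cardinal.card_ord, ← card_Iio_eq] at this
      exact absurd h (not_lt.2 this)
  obtain ⟨s, hs⟩ := tyi_surj (lt_trans hle (tyi_lt_ord u))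
  exact ⟨s, tyi_lt_tyi.1 (by rw [hs]; exact hle),
    by rw [card_Iio_eq, hs, Cardinal.card_ord]⟩

/-- measurable cardinals are strong limits -/
theorem strong_limit {κ : Cardinal.{0}} (hℵ : ℵ₀ < κ)
    {D : Set (Set κ.ord.ToType)} (hUF : IsUltrafilterOn Set.univ D)
    (hcomp : IsKComplete κ D) (hnp : ∀ a : κ.ord.ToType, ({a} : Set κ.ord.ToType) ∉ D)
    {μ : Cardinal.{0}} (hμ : μ < κ) : 2 ^ μ < κ := by
  classical
  by_contra hcon
  push_neg at hcon
  have hμ0 : μ ≠ 0 := by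
    rintro rfl
    rw [Cardinal.power_zero] at hcon
    exact absurd (lt_of_lt_of_le hℵ hcon) (by
      intro hh
      exact absurd (lt_trans Cardinal.one_lt_aleph0 hh) (by simp))
  set M := μ.ord.ToType with hM
  have hMne : Nonempty M :=
    Ordinal.toType_nonempty_iff_ne_zero.2 (fun h => hμ0 (Cardinal.ord_eq_zero.1 h))
  have hcard : κ ≤ #(Set M) := by
    rw [Cardinal.mk_set, Cardinal.mk_ord_toType]; exact hcon
  have hTcard : #κ.ord.ToType = κ := Cardinal.mk_ord_toType κ
  obtain ⟨f⟩ : Nonempty (κ.ord.ToType ↪ Set M) := by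
    rw [← Cardinal.le_def, hTcard]; exact hcard
  set s : M → Set κ.ord.ToType := fun ξ =>
    if {t | ξ ∈ f t} ∈ D then {t | ξ ∈ f t} else Set.univ \ {t | ξ ∈ f t} with hs
  have hsD : ∀ ξ, s ξ ∈ D := by
    intro ξ
    by_cases h : {t | ξ ∈ f t} ∈ D
    · simp only [hs, if_pos h]; exact h
    · simp only [hs, if_neg h]
      exact uf_compl hUF (Set.subset_univ _) h
  have hfam : ⋂₀ (Set.range s) ∈ D := by
    apply hcomp _ (Set.range_nonempty s)
    · refine lt_of_le_of_lt Cardinal.mk_range_le ?_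
      rw [hM, Cardinal.mk_ord_toType]; exact hμ
    · rintro X ⟨ξ, rfl⟩; exact hsD ξ
  obtain ⟨t₀, ht₀⟩ := uf_nonempty hUF hfam
  have hsub : ⋂₀ (Set.range s) ⊆ {t₀} := by
    intro t ht
    have : f t = f t₀ := by
      ext ξ
      have h1 : t ∈ s ξ := ht _ ⟨ξ, rfl⟩
      have h2 : t₀ ∈ s ξ := ht₀ _ ⟨ξ, rfl⟩
      by_cases h : {t | ξ ∈ f t} ∈ D
      · simp only [hs, if_pos h] at h1 h2
        simp only [Set.mem_setOf_eq] at h1 h2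
        exact iff_of_true h1 h2
      · simp only [hs, if_neg h, Set.mem_diff, Set.mem_setOf_eq] at h1 h2
        exact iff_of_false h1.2 h2.2
    rw [Set.mem_singleton_iff]
    exact f.injective this
  exact hnp t₀ (uf_superset hUF hfam (Set.subset_univ _) hsub)

theorem uf_compl' : True := trivial



section Wsec

variable {κ lam : Cardinal.{0}} {W : Set (Set (Set lam.ord.ToType))}

theorem ae_mem (hUF : IsUltrafilterOn (Pkl κ lam) W) (hc : IsKComplete κ W)
    (hfine : IsFine κ lam W) {s : Set lam.ord.ToType} (hs : #s < κ) :
    {x | x ∈ Pkl κ lam ∧ s ⊆ x} ∈ W := by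
  rcases Set.eq_empty_or_nonempty s with h | h
  · have : {x | x ∈ Pkl κ lam ∧ s ⊆ x} = Pkl κ lam := by
      ext x; simp [h]
    rw [this]; exact uf_carrier hUF
  · have hfam : ⋂₀ ((fun a => {x | x ∈ Pkl κ lam ∧ a ∈ x}) '' s) ∈ W := by
      apply hc _ (h.image _) (lt_of_le_of_lt Cardinal.mk_image_le hs)
      rintro X ⟨a, _, rfl⟩
      exact hfine a
    have heq : ⋂₀ ((fun a => {x | x ∈ Pkl κ lam ∧ a ∈ x}) '' s)
        = {x | x ∈ Pkl κ lam ∧ s ⊆ x} := by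
      ext x
      simp only [Set.mem_sInter, Set.mem_image, forall_exists_index, and_imp,
        Set.mem_setOf_eq]
      constructor
      · intro hx
        rcases h with ⟨a0, ha0⟩
        refine ⟨(hx _ a0 ha0 rfl).1, fun a ha => (hx _ a ha rfl).2⟩
      · rintro ⟨hxP, hxs⟩ X a ha rfl
        exact ⟨hxP, hxs ha⟩
    rwa [heq] at hfam

theorem press (hUF : IsUltrafilterOn (Pkl κ lam) W) (hnorm : IsNormalOnPkl κ lam W)
    {f : Set lam.ord.ToType → lam.ord.ToType} {B : Set (Set lam.ord.ToType)}
    (hB : B ∈ W) (hfB : ∀ x ∈ B, f x ∈ x) :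
    ∃ a, B ∩ {x | f x = a} ∈ W := by
  have h1 : {x | x ∈ Pkl κ lam ∧ f x ∈ x} ∈ W :=
    uf_superset hUF hB (fun x hx => hx.1) (fun x hx => ⟨uf_sub hUF hB hx, hfB x hx⟩)
  obtain ⟨a, ha⟩ := hnorm f h1
  refine ⟨a, ?_⟩
  have := uf_inter hUF hB ha
  exact uf_superset hUF this (fun x hx => uf_sub hUF hB hx.1)
    (fun x hx => ⟨hx.1, hx.2.2⟩)

theorem diag (hne : Nonempty lam.ord.ToType)
    (hUF : IsUltrafilterOn (Pkl κ lam) W) (hnorm : IsNormalOnPkl κ lam W)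
    (A : lam.ord.ToType → Set (Set lam.ord.ToType)) (hA : ∀ a, A a ∈ W) :
    {x | x ∈ Pkl κ lam ∧ ∀ a ∈ x, x ∈ A a} ∈ W := by
  classical
  set dg := {x | x ∈ Pkl κ lam ∧ ∀ a ∈ x, x ∈ A a} with hdg
  rcases uf_ultra hUF (show dg ⊆ Pkl κ lam from fun x hx => hx.1) with h | h
  · exact h
  · exfalso
    set f : Set lam.ord.ToType → lam.ord.ToType := fun x =>
      if h : ∃ a, a ∈ x ∧ x ∉ A a then h.choose else hne.some with hf
    have hfbad : ∀ x ∈ Pkl κ lam \ dg, f x ∈ x ∧ x ∉ A (f x) := by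
      intro x hx
      have hex : ∃ a, a ∈ x ∧ x ∉ A a := by
        by_contra hno
        push_neg at hno
        exact hx.2 ⟨hx.1, fun a ha => hno a ha⟩
      simp only [hf, dif_pos hex]
      exact hex.choose_spec
    obtain ⟨a₀, ha₀⟩ := press hUF hnorm h (fun x hx => (hfbad x hx).1)
    have hint := uf_inter hUF ha₀ (hA a₀)
    obtain ⟨x, hx⟩ := uf_nonempty hUF hint
    have h1 := hfbad x hx.1.1
    rw [hx.1.2] at h1
    exact h1.2 hx.2

theorem ae_closed_unary (hne : Nonempty lam.ord.ToType)
    (hUF : IsUltrafilterOn (Pkl κ lam) W) (hnorm : IsNormalOnPkl κ lam W)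
    (hfine : IsFine κ lam W) (g : lam.ord.ToType → lam.ord.ToType) :
    {x | x ∈ Pkl κ lam ∧ ∀ a ∈ x, g a ∈ x} ∈ W := by
  have h := diag hne hUF hnorm (fun a => {x | x ∈ Pkl κ lam ∧ g a ∈ x})
    (fun a => hfine (g a))
  exact uf_superset hUF h (fun x hx => hx.1)
    (fun x hx => ⟨hx.1, fun a ha => (hx.2 a ha).2⟩)

theorem ae_closed_binary (hne : Nonempty lam.ord.ToType)
    (hUF : IsUltrafilterOn (Pkl κ lam) W) (hnorm : IsNormalOnPkl κ lam W)
    (hfine : IsFine κ lam W) (g : lam.ord.ToType → lam.ord.ToType → lam.ord.ToType) :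
    {x | x ∈ Pkl κ lam ∧ ∀ a ∈ x, ∀ b ∈ x, g a b ∈ x} ∈ W := by
  have h := diag hne hUF hnorm
    (fun a => {x | x ∈ Pkl κ lam ∧ ∀ b ∈ x, g a b ∈ x})
    (fun a => ae_closed_unary hne hUF hnorm hfine (g a))
  exact uf_superset hUF h (fun x hx => hx.1)
    (fun x hx => ⟨hx.1, fun a ha b hb => (hx.2 a ha).2 b hb⟩)

end Wsec

end MenasAux












namespace PartA

theorem partA {κ : Cardinal.{0}} (hℵ : ℵ₀ < κ)
    {D : Set (Set κ.ord.ToType)} (hUF : IsUltrafilterOn Set.univ D)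
    (hcomp : IsKComplete κ D) (hnp : ∀ a : κ.ord.ToType, ({a} : Set κ.ord.ToType) ∉ D)
    (hunb : ∀ β : Cardinal.{0}, β < κ →
      ∃ γ : Cardinal.{0}, β ≤ γ ∧ γ < κ ∧ IsSupercompactCard γ) :
    IsStronglyCompactCard κ := by
  intro lam hκlam
  have hch : ∀ t : κ.ord.ToType, ∃ γ, #(Set.Iio t) ≤ γ ∧ γ < κ ∧ IsSupercompactCard γ :=
    fun t => hunb _ (MenasAux.mk_Iio_lt t)
  choose γ hγ₁ hγ₂ hγ₃ using hch
  have hsc : ∀ t, ∃ F, IsUltrafilterOn (Pkl (γ t) lam) F ∧ IsKComplete (γ t) F ∧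
      IsFine (γ t) lam F ∧ IsNormalOnPkl (γ t) lam F :=
    fun t => hγ₃ t lam (le_of_lt (lt_of_lt_of_le (hγ₂ t) hκlam))
  choose U hU₁ hU₂ hU₃ _hU₄ using hsc
  have hPsub : ∀ t, Pkl (γ t) lam ⊆ Pkl κ lam := by
    intro t x hx
    exact lt_trans hx (hγ₂ t)
  set F : Set (Set (Set lam.ord.ToType)) :=
    {X | X ⊆ Pkl κ lam ∧ {t | X ∩ Pkl (γ t) lam ∈ U t} ∈ D} with hF
  have htrace_carrier : ∀ t, Pkl κ lam ∩ Pkl (γ t) lam = Pkl (γ t) lam := by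
    intro t
    exact Set.inter_eq_self_of_subset_right (hPsub t)
  refine ⟨F, ⟨?_, ?_, ?_, ?_, ?_, ?_⟩, ?_, ?_⟩
  · -- subsets of carrier
    exact fun X hX => hX.1
  · -- carrier mem
    refine ⟨le_refl _, ?_⟩
    have : {t | Pkl κ lam ∩ Pkl (γ t) lam ∈ U t} = Set.univ := by
      ext t
      simp only [Set.mem_setOf_eq, Set.mem_univ, iff_true, htrace_carrier t]
      exact MenasAux.uf_carrier (hU₁ t)
    rw [this]
    exact MenasAux.uf_carrier hUF
  · -- empty not mem
    rintro ⟨-, h2⟩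
    have : {t | (∅ : Set (Set lam.ord.ToType)) ∩ Pkl (γ t) lam ∈ U t} = ∅ := by
      ext t
      simp only [Set.empty_inter, Set.mem_setOf_eq, Set.mem_empty_iff_false, iff_false]
      exact MenasAux.uf_empty (hU₁ t)
    rw [this] at h2
    exact MenasAux.uf_empty hUF h2
  · -- superset
    rintro X ⟨hX1, hX2⟩ Y hY1 hXY
    refine ⟨hY1, ?_⟩
    refine MenasAux.uf_superset hUF hX2 (Set.subset_univ _) ?_
    intro t ht
    exact MenasAux.uf_superset (hU₁ t) ht Set.inter_subset_right
      (Set.inter_subset_inter_left _ hXY)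
  · -- intersection
    rintro X ⟨hX1, hX2⟩ Y ⟨hY1, hY2⟩
    refine ⟨fun z hz => hX1 hz.1, ?_⟩
    refine MenasAux.uf_superset hUF (MenasAux.uf_inter hUF hX2 hY2) (Set.subset_univ _) ?_
    rintro t ⟨ht1, ht2⟩
    have : X ∩ Y ∩ Pkl (γ t) lam = (X ∩ Pkl (γ t) lam) ∩ (Y ∩ Pkl (γ t) lam) := by
      ext z; simp only [Set.mem_inter_iff]; tauto
    rw [Set.mem_setOf_eq, this]
    exact MenasAux.uf_inter (hU₁ t) ht1 ht2
  · -- ultra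
    intro X hX
    by_cases h : {t | X ∩ Pkl (γ t) lam ∈ U t} ∈ D
    · exact Or.inl ⟨hX, h⟩
    · right
      refine ⟨Set.diff_subset, ?_⟩
      have hcpl := MenasAux.uf_compl hUF (Set.subset_univ _) h
      refine MenasAux.uf_superset hUF hcpl (Set.subset_univ _) ?_
      rintro t ⟨-, ht⟩
      have h2 := MenasAux.uf_compl (hU₁ t) (Set.inter_subset_right) ht
      have : Pkl (γ t) lam \ (X ∩ Pkl (γ t) lam) = (Pkl κ lam \ X) ∩ Pkl (γ t) lam := by
        ext z
        simp only [Set.mem_diff, Set.mem_inter_iff]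
        constructor
        · rintro ⟨hz1, hz2⟩
          exact ⟨⟨hPsub t hz1, fun hzX => hz2 ⟨hzX, hz1⟩⟩, hz1⟩
        · rintro ⟨⟨-, hz2⟩, hz3⟩
          exact ⟨hz3, fun hh => hz2 hh.1⟩
      rw [Set.mem_setOf_eq, ← this]
      exact h2
  · -- κ-complete
    intro S hSne hScard hSF
    obtain ⟨X₀, hX₀⟩ := hSne
    refine ⟨(Set.sInter_subset_of_mem hX₀).trans (hSF X₀ hX₀).1, ?_⟩
    -- the set of t where all traces are in U t
    have hG : ⋂₀ ((fun X => {t | X ∩ Pkl (γ t) lam ∈ U t}) '' S) ∈ D := by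
      apply hcomp _ (⟨_, Set.mem_image_of_mem _ hX₀⟩)
        (lt_of_le_of_lt Cardinal.mk_image_le hScard)
      rintro Y ⟨X, hX, rfl⟩
      exact (hSF X hX).2
    -- the set of t where γ t is big
    have hsucc : Order.succ (#S) < κ :=
      lt_of_le_of_lt (Order.succ_le_of_lt (Cardinal.cantor _))
        (MenasAux.strong_limit hℵ hUF hcomp hnp hScard)
    obtain ⟨s₀, hs₀⟩ := MenasAux.exists_card_Iio (κ := κ) hsucc
    have hIic : #(Set.Iic s₀) < κ := by
      have h1 : (Set.Iic s₀ : Set κ.ord.ToType) = Set.Iio s₀ ∪ {s₀} := by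
        ext z
        simp only [Set.mem_Iic, Set.mem_union, Set.mem_Iio, Set.mem_singleton_iff]
        exact le_iff_lt_or_eq
      rw [h1]
      refine lt_of_le_of_lt (Cardinal.mk_union_le _ _) ?_
      rw [hs₀, Cardinal.mk_singleton]
      exact Cardinal.add_lt_of_lt (le_of_lt hℵ) hsucc (lt_trans Cardinal.one_lt_aleph0 hℵ)
    have hH : Set.univ \ Set.Iic s₀ ∈ D :=
      MenasAux.uf_small_null hUF hcomp hnp (Set.subset_univ _) hIic
    have hHsub : Set.univ \ Set.Iic s₀ ⊆ {t | #S < γ t} := by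
      rintro t ⟨-, ht⟩
      have hst : s₀ < t := not_le.1 ht
      have h2 : Set.Iio s₀ ⊆ Set.Iio t := fun z hz => lt_trans hz hst
      have h3 : Order.succ (#S) ≤ #(Set.Iio t) := by
        rw [← hs₀]; exact Cardinal.mk_le_mk_of_subset h2
      exact lt_of_lt_of_le (lt_of_lt_of_le (Order.lt_succ _) h3) (hγ₁ t)
    refine MenasAux.uf_superset hUF
      (MenasAux.uf_inter hUF hG hH) (Set.subset_univ _) ?_
    rintro t ⟨ht1, ht2⟩
    have htbig : #S < γ t := hHsub ht2
    have hfam : ⋂₀ ((fun X => X ∩ Pkl (γ t) lam) '' S) ∈ U t := by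
      apply hU₂ t _ ⟨_, Set.mem_image_of_mem _ hX₀⟩ (lt_of_le_of_lt Cardinal.mk_image_le htbig)
      rintro Y ⟨X, hX, rfl⟩
      exact ht1 _ (Set.mem_image_of_mem _ hX)
    have heq : ⋂₀ ((fun X => X ∩ Pkl (γ t) lam) '' S) = ⋂₀ S ∩ Pkl (γ t) lam := by
      ext z
      simp only [Set.mem_sInter, Set.mem_image, forall_exists_index, and_imp,
        Set.mem_inter_iff]
      constructor
      · intro hz
        exact ⟨fun X hX => (hz _ X hX rfl).1, (hz _ X₀ hX₀ rfl).2⟩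
      · rintro ⟨hz1, hz2⟩ Y X hX rfl
        exact ⟨hz1 X hX, hz2⟩
    rw [Set.mem_setOf_eq, ← heq]
    exact hfam
  · -- fine
    intro a
    refine ⟨fun x hx => hx.1, ?_⟩
    have : {t | {x | x ∈ Pkl κ lam ∧ a ∈ x} ∩ Pkl (γ t) lam ∈ U t} = Set.univ := by
      ext t
      simp only [Set.mem_setOf_eq, Set.mem_univ, iff_true]
      have heq : {x | x ∈ Pkl κ lam ∧ a ∈ x} ∩ Pkl (γ t) lam
          = {x | x ∈ Pkl (γ t) lam ∧ a ∈ x} := by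
        ext z
        simp only [Set.mem_inter_iff, Set.mem_setOf_eq]
        constructor
        · rintro ⟨⟨-, hz2⟩, hz3⟩; exact ⟨hz3, hz2⟩
        · rintro ⟨hz1, hz2⟩; exact ⟨⟨hPsub t hz1, hz2⟩, hz1⟩
      rw [heq]
      exact hU₃ t a
    rw [this]
    exact MenasAux.uf_carrier hUF

end PartA

namespace PartB

variable {κ lam : Cardinal.{0}}

/-- the trace of `x` on the `κ`-part -/
def Sx (ι : κ.ord.ToType ↪ lam.ord.ToType) (x : Set lam.ord.ToType) : Set κ.ord.ToType :=
  {t | ι t ∈ x}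

open Classical in
noncomputable def txf (hκ : ℵ₀ < κ) (ι : κ.ord.ToType ↪ lam.ord.ToType)
    (x : Set lam.ord.ToType) : κ.ord.ToType :=
  letI hTne : Nonempty κ.ord.ToType := Ordinal.toType_nonempty_iff_ne_zero.2
    (fun h => by
      rw [Cardinal.ord_eq_zero] at h
      exact absurd (h ▸ hκ) (by simp))
  if h : ((Sx ι x)ᶜ : Set κ.ord.ToType).Nonempty then
    ((inferInstance : WellFoundedLT κ.ord.ToType)).wf.min _ h else hTne.some

theorem mk_Sx_le (ι : κ.ord.ToType ↪ lam.ord.ToType) (x : Set lam.ord.ToType) :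
    #(Sx ι x) ≤ #x := by
  refine ⟨⟨fun t => ⟨ι t.1, t.2⟩, ?_⟩⟩
  rintro ⟨t, ht⟩ ⟨u, hu⟩ h
  simp only [Subtype.mk_eq_mk] at h ⊢
  exact ι.injective (congrArg Subtype.val h)

theorem compl_Sx_nonempty (hκ : ℵ₀ < κ) (ι : κ.ord.ToType ↪ lam.ord.ToType)
    {x : Set lam.ord.ToType} (hx : x ∈ Pkl κ lam) :
    ((Sx ι x)ᶜ : Set κ.ord.ToType).Nonempty := by
  rw [Set.nonempty_compl]
  intro h
  have h2 : #(Sx ι x) < κ := lt_of_le_of_lt (mk_Sx_le ι x) hx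
  rw [h] at h2
  simp only [Cardinal.mk_univ, Cardinal.mk_ord_toType] at h2
  exact lt_irrefl _ h2

theorem tx_not_mem (hκ : ℵ₀ < κ) (ι : κ.ord.ToType ↪ lam.ord.ToType)
    {x : Set lam.ord.ToType} (hx : x ∈ Pkl κ lam) : txf hκ ι x ∉ Sx ι x := by
  have h := compl_Sx_nonempty hκ ι hx
  rw [txf, dif_pos h]
  exact ((inferInstance : WellFoundedLT κ.ord.ToType)).wf.min_mem _ h

/-- downward closedness of the trace -/
def Dn (ι : κ.ord.ToType ↪ lam.ord.ToType) (x : Set lam.ord.ToType) : Prop :=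
  ∀ t ∈ Sx ι x, ∀ t' : κ.ord.ToType, t' < t → t' ∈ Sx ι x

theorem Sx_eq_Iio (hκ : ℵ₀ < κ) (ι : κ.ord.ToType ↪ lam.ord.ToType)
    {x : Set lam.ord.ToType} (hx : x ∈ Pkl κ lam) (hdn : Dn ι x) :
    Sx ι x = Set.Iio (txf hκ ι x) := by
  have hne := compl_Sx_nonempty hκ ι hx
  have hmem := tx_not_mem hκ ι hx
  ext t
  simp only [Set.mem_Iio]
  constructor
  · intro ht
    rcases lt_trichotomy t (txf hκ ι x) with h | h | h
    · exact h
    · exact absurd (h ▸ ht) hmem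
    · exact absurd (hdn t ht _ h) hmem
  · intro ht
    by_contra hts
    have := ((inferInstance : WellFoundedLT κ.ord.ToType)).wf.not_lt_min ((Sx ι x)ᶜ : Set κ.ord.ToType) (x := t) hts
    rw [txf, dif_pos hne] at ht
    exact this ht

end PartB

namespace PartB

open MenasAux

variable {κ lam : Cardinal.{0}} {W : Set (Set (Set lam.ord.ToType))}

theorem hTne {κ : Cardinal.{0}} (hℵ : ℵ₀ < κ) : Nonempty κ.ord.ToType :=
  Ordinal.toType_nonempty_iff_ne_zero.2
    (fun h => by
      rw [Cardinal.ord_eq_zero] at h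
      exact absurd (h ▸ hℵ) (by simp))

section AE

variable (hℵ : ℵ₀ < κ)
  (hne : Nonempty lam.ord.ToType)
  (hUF : IsUltrafilterOn (Pkl κ lam) W) (hc : IsKComplete κ W)
  (hfine : IsFine κ lam W) (hnorm : IsNormalOnPkl κ lam W)
  (ι : κ.ord.ToType ↪ lam.ord.ToType) (e : lam.ord.ToType ≃ Set κ.ord.ToType)

include hℵ hne hUF hc hfine hnorm

theorem fineT (t : κ.ord.ToType) : {x | x ∈ Pkl κ lam ∧ t ∈ Sx ι x} ∈ W := hfine (ι t)

/-- almost every `x` contains all of a fixed small subset of the `κ`-part -/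
theorem ae_subT {s : Set κ.ord.ToType} (hs : #s < κ) :
    {x | x ∈ Pkl κ lam ∧ ∀ t ∈ s, t ∈ Sx ι x} ∈ W := by
  have h := ae_mem hUF hc hfine (s := ι '' s) (lt_of_le_of_lt Cardinal.mk_image_le hs)
  refine uf_superset hUF h (fun x hx => hx.1) ?_
  rintro x ⟨hx1, hx2⟩
  exact ⟨hx1, fun t ht => hx2 (Set.mem_image_of_mem _ ht)⟩

/-- almost every trace is downward closed -/
theorem ae_dn : {x | x ∈ Pkl κ lam ∧ Dn ι x} ∈ W := by
  classical
  rcases uf_ultra hUF (show {x | x ∈ Pkl κ lam ∧ Dn ι x} ⊆ Pkl κ lam from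
    fun x hx => hx.1) with h | h
  · exact h
  exfalso
  set P : Set lam.ord.ToType → κ.ord.ToType → Prop :=
    fun x t => t ∈ Sx ι x ∧ ∃ t', t' < t ∧ t' ∉ Sx ι x with hP
  set g : Set lam.ord.ToType → κ.ord.ToType := fun x =>
    if h : ∃ t, P x t then h.choose else (hTne hℵ).some with hg
  have hgspec : ∀ x, (∃ t, P x t) → P x (g x) := by
    intro x hx
    simp only [hg, dif_pos hx]
    exact hx.choose_spec
  have hbadP : ∀ x ∈ Pkl κ lam \ {x | x ∈ Pkl κ lam ∧ Dn ι x}, ∃ t, P x t := by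
    rintro x ⟨hx1, hx2⟩
    have : ¬ Dn ι x := fun hdn => hx2 ⟨hx1, hdn⟩
    rw [Dn] at this
    push_neg at this
    obtain ⟨t, ht, t', ht'⟩ := this
    exact ⟨t, ht, t', ht'⟩
  obtain ⟨a₀, ha₀⟩ := press hUF hnorm h (fun x hx => (hgspec x (hbadP x hx)).1)
  obtain ⟨x₀, hx₀⟩ := uf_nonempty hUF ha₀
  set t₀ : κ.ord.ToType := g x₀ with ht₀
  have ha₀' : a₀ = ι t₀ := hx₀.2.symm
  have hsmall := ae_subT hℵ hne hUF hc hfine hnorm ι (MenasAux.mk_Iio_lt t₀)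
  obtain ⟨x₁, hx₁⟩ := uf_nonempty hUF (uf_inter hUF ha₀ hsmall)
  have hgx₁ : g x₁ = t₀ := by
    have := hx₁.1.2
    rw [ha₀'] at this
    exact ι.injective this
  obtain ⟨-, t', ht'lt, ht'⟩ := hgspec x₁ (hbadP x₁ hx₁.1.1)
  rw [hgx₁] at ht'lt
  exact ht' (hx₁.2.2 t' ht'lt)

/-- almost every trace is closed under a fixed unary function on the `κ`-part -/
theorem ae_closedT (g : κ.ord.ToType → κ.ord.ToType) :
    {x | x ∈ Pkl κ lam ∧ ∀ t ∈ Sx ι x, g t ∈ Sx ι x} ∈ W := by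
  classical
  set g' : lam.ord.ToType → lam.ord.ToType := fun a =>
    if h : ∃ t, ι t = a then ι (g h.choose) else a with hg'
  have h := ae_closed_unary hne hUF hnorm hfine g'
  refine uf_superset hUF h (fun x hx => hx.1) ?_
  rintro x ⟨hx1, hx2⟩
  refine ⟨hx1, fun t ht => ?_⟩
  have hex : ∃ t', ι t' = ι t := ⟨t, rfl⟩
  have : g' (ι t) = ι (g t) := by
    simp only [hg', dif_pos hex]
    congr 1
    congr 1
    exact ι.injective hex.choose_spec
  have h2 := hx2 (ι t) ht
  rw [this] at h2
  exact h2

/-- almost every trace is closed under a fixed binary function on the `κ`-part -/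
theorem ae_closedT2 (g : κ.ord.ToType → κ.ord.ToType → κ.ord.ToType) :
    {x | x ∈ Pkl κ lam ∧ ∀ t ∈ Sx ι x, ∀ u ∈ Sx ι x, g t u ∈ Sx ι x} ∈ W := by
  classical
  set g' : lam.ord.ToType → lam.ord.ToType → lam.ord.ToType := fun a b =>
    if h : (∃ t, ι t = a) ∧ (∃ u, ι u = b) then ι (g h.1.choose h.2.choose) else a with hg'
  have h := ae_closed_binary hne hUF hnorm hfine g'
  refine uf_superset hUF h (fun x hx => hx.1) ?_
  rintro x ⟨hx1, hx2⟩
  refine ⟨hx1, fun t ht u hu => ?_⟩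
  have hex : (∃ t', ι t' = ι t) ∧ (∃ u', ι u' = ι u) := ⟨⟨t, rfl⟩, ⟨u, rfl⟩⟩
  have : g' (ι t) (ι u) = ι (g t u) := by
    simp only [hg', dif_pos hex]
    congr 1
    have h1 : hex.1.choose = t := ι.injective hex.1.choose_spec
    have h2 : hex.2.choose = u := ι.injective hex.2.choose_spec
    rw [h1, h2]
  have h2 := hx2 (ι t) ht (ι u) hu
  rwa [this] at h2

end AE

end PartB

namespace PartB

open MenasAux

variable {κ lam : Cardinal.{0}} {W : Set (Set (Set lam.ord.ToType))}

/-- covering property: every subset of the trace is coded in `x` -/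
def Cov (ι : κ.ord.ToType ↪ lam.ord.ToType) (e : lam.ord.ToType ≃ Set κ.ord.ToType)
    (x : Set lam.ord.ToType) : Prop :=
  ∀ B : Set κ.ord.ToType, B ⊆ Sx ι x → ∃ ξ ∈ x, e ξ ∩ Sx ι x = B

section AE2

variable (hℵ : ℵ₀ < κ)
  (hne : Nonempty lam.ord.ToType)
  (hUF : IsUltrafilterOn (Pkl κ lam) W) (hc : IsKComplete κ W)
  (hfine : IsFine κ lam W) (hnorm : IsNormalOnPkl κ lam W)
  (ι : κ.ord.ToType ↪ lam.ord.ToType) (e : lam.ord.ToType ≃ Set κ.ord.ToType)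

include hℵ hne hUF hc hfine hnorm

theorem ae_cov : {x | x ∈ Pkl κ lam ∧ Cov ι e x} ∈ W := by
  classical
  rcases uf_ultra hUF (show {x | x ∈ Pkl κ lam ∧ Cov ι e x} ⊆ Pkl κ lam from
    fun x hx => hx.1) with h | h
  · exact h
  exfalso
  set bad := Pkl κ lam \ {x | x ∈ Pkl κ lam ∧ Cov ι e x} with hbaddef
  set Bx : Set lam.ord.ToType → Set κ.ord.ToType := fun x =>
    if h : ∃ B, B ⊆ Sx ι x ∧ ∀ ξ ∈ x, e ξ ∩ Sx ι x ≠ B then h.choose else ∅ with hBx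
  have hBxspec : ∀ x ∈ bad, Bx x ⊆ Sx ι x ∧ ∀ ξ ∈ x, e ξ ∩ Sx ι x ≠ Bx x := by
    rintro x ⟨hx1, hx2⟩
    have hex : ∃ B, B ⊆ Sx ι x ∧ ∀ ξ ∈ x, e ξ ∩ Sx ι x ≠ B := by
      have : ¬ Cov ι e x := fun hcov => hx2 ⟨hx1, hcov⟩
      rw [Cov] at this
      push_neg at this
      obtain ⟨B, hB1, hB2⟩ := this
      exact ⟨B, hB1, fun ξ hξ => hB2 ξ hξ⟩
    simp only [hBx, dif_pos hex]
    exact hex.choose_spec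
  set Bt : Set κ.ord.ToType := {t | {x | x ∈ bad ∧ t ∈ Bx x} ∈ W} with hBtdef
  set At : κ.ord.ToType → Set (Set lam.ord.ToType) := fun t =>
    if {x | x ∈ bad ∧ t ∈ Bx x} ∈ W then {x | x ∈ bad ∧ t ∈ Bx x}
    else bad \ {x | x ∈ bad ∧ t ∈ Bx x} with hAt
  have hAtW : ∀ t, At t ∈ W := by
    intro t
    by_cases ht : {x | x ∈ bad ∧ t ∈ Bx x} ∈ W
    · simp only [hAt, if_pos ht]; exact ht
    · simp only [hAt, if_neg ht]
      have h1 := uf_compl hUF (show {x | x ∈ bad ∧ t ∈ Bx x} ⊆ Pkl κ lam from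
        fun x hx => hx.1.1) ht
      refine uf_superset hUF (uf_inter hUF h h1) (fun x hx => hx.1.1) ?_
      rintro x ⟨hx1, hx2⟩
      exact ⟨hx1, hx2.2⟩
  have hAtdec : ∀ t, ∀ x ∈ At t, x ∈ bad ∧ (t ∈ Bx x ↔ t ∈ Bt) := by
    intro t x hx
    by_cases ht : {x | x ∈ bad ∧ t ∈ Bx x} ∈ W
    · simp only [hAt, if_pos ht] at hx
      exact ⟨hx.1, iff_of_true hx.2 ht⟩
    · simp only [hAt, if_neg ht] at hx
      exact ⟨hx.1, iff_of_false (fun hh => hx.2 ⟨hx.1, hh⟩) ht⟩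
  set A' : lam.ord.ToType → Set (Set lam.ord.ToType) := fun a =>
    if h : ∃ t, ι t = a then At h.choose else Pkl κ lam with hA'
  have hA'W : ∀ a, A' a ∈ W := by
    intro a
    by_cases h : ∃ t, ι t = a
    · simp only [hA', dif_pos h]; exact hAtW _
    · simp only [hA', dif_neg h]; exact uf_carrier hUF
  have hdiag := diag hne hUF hnorm A' hA'W
  have hfineBt := hfine (e.symm Bt)
  obtain ⟨x, hx⟩ := uf_nonempty hUF (uf_inter3 hUF h hdiag hfineBt)
  obtain ⟨⟨hxbad, hxdiag⟩, hxf⟩ := hx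
  have hxA : ∀ t ∈ Sx ι x, x ∈ At t := by
    intro t ht
    have h2 := hxdiag.2 (ι t) ht
    have hex : ∃ t', ι t' = ι t := ⟨t, rfl⟩
    rw [hA'] at h2
    simp only [dif_pos hex] at h2
    have : hex.choose = t := ι.injective hex.choose_spec
    rwa [this] at h2
  have htrace : e (e.symm Bt) ∩ Sx ι x = Bx x := by
    rw [Equiv.apply_symm_apply]
    ext t
    simp only [Set.mem_inter_iff]
    constructor
    · rintro ⟨ht1, ht2⟩
      exact ((hAtdec t x (hxA t ht2)).2).2 ht1
    · intro ht
      have hts : t ∈ Sx ι x := (hBxspec x hxbad).1 ht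
      exact ⟨((hAtdec t x (hxA t hts)).2).1 ht, hts⟩
  exact (hBxspec x hxbad).2 (e.symm Bt) hxf.2 htrace

theorem ae_Q : {x | x ∈ Pkl κ lam ∧ ∀ ξ ∈ x, ∀ ζ ∈ x,
    e ξ ∩ Sx ι x ⊆ e ζ ∩ Sx ι x → txf hℵ ι x ∈ e ξ → txf hℵ ι x ∈ e ζ} ∈ W := by
  classical
  rcases uf_ultra hUF (show {x | x ∈ Pkl κ lam ∧ ∀ ξ ∈ x, ∀ ζ ∈ x,
      e ξ ∩ Sx ι x ⊆ e ζ ∩ Sx ι x → txf hℵ ι x ∈ e ξ → txf hℵ ι x ∈ e ζ} ⊆ Pkl κ lam from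
    fun x hx => hx.1) with h | h
  · exact h
  exfalso
  set P : Set lam.ord.ToType → (lam.ord.ToType × lam.ord.ToType) → Prop := fun x p =>
    p.1 ∈ x ∧ p.2 ∈ x ∧ e p.1 ∩ Sx ι x ⊆ e p.2 ∩ Sx ι x ∧
      txf hℵ ι x ∈ e p.1 ∧ txf hℵ ι x ∉ e p.2 with hP
  set gp : Set lam.ord.ToType → lam.ord.ToType × lam.ord.ToType := fun x =>
    if h : ∃ p, P x p then h.choose else (hne.some, hne.some) with hgp
  have hgpspec : ∀ x, (∃ p, P x p) → P x (gp x) := by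
    intro x hx
    simp only [hgp, dif_pos hx]
    exact hx.choose_spec
  have hbadP : ∀ x ∈ Pkl κ lam \ {x | x ∈ Pkl κ lam ∧ ∀ ξ ∈ x, ∀ ζ ∈ x,
      e ξ ∩ Sx ι x ⊆ e ζ ∩ Sx ι x → txf hℵ ι x ∈ e ξ → txf hℵ ι x ∈ e ζ},
      ∃ p, P x p := by
    rintro x ⟨hx1, hx2⟩
    have : ¬ ∀ ξ ∈ x, ∀ ζ ∈ x,
        e ξ ∩ Sx ι x ⊆ e ζ ∩ Sx ι x → txf hℵ ι x ∈ e ξ → txf hℵ ι x ∈ e ζ :=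
      fun hq => hx2 ⟨hx1, hq⟩
    push_neg at this
    obtain ⟨ξ, hξ, ζ, hζ, h1, h2, h3⟩ := this
    exact ⟨(ξ, ζ), hξ, hζ, h1, h2, h3⟩
  obtain ⟨ξ₀, hB1⟩ := press hUF hnorm h (fun x hx => (hgpspec x (hbadP x hx)).1)
  obtain ⟨ζ₀, hB2⟩ := press hUF hnorm hB1 (fun x hx => (hgpspec x (hbadP x hx.1)).2.1)
  have hmaster : e ξ₀ ⊆ e ζ₀ := by
    intro t ht
    obtain ⟨x, hx⟩ := uf_nonempty hUF (uf_inter hUF hB2 (fineT hℵ hne hUF hc hfine hnorm ι t))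
    obtain ⟨⟨hxbad, hx1⟩, hx2⟩ := hx.1
    obtain ⟨-, -, hq3, -, -⟩ := hgpspec x (hbadP x hxbad)
    rw [hx1, hx2] at hq3
    exact (hq3 ⟨ht, hx.2.2⟩).1
  obtain ⟨x, hx⟩ := uf_nonempty hUF hB2
  obtain ⟨⟨hxbad, hx1⟩, hx2⟩ := hx
  obtain ⟨-, -, -, hq4, hq5⟩ := hgpspec x (hbadP x hxbad)
  rw [hx1] at hq4
  rw [hx2] at hq5
  exact hq5 (hmaster hq4)

theorem ae_NE : {x | x ∈ Pkl κ lam ∧ ∀ ξ ∈ x,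
    txf hℵ ι x ∈ e ξ → (e ξ ∩ Sx ι x).Nonempty} ∈ W := by
  classical
  rcases uf_ultra hUF (show {x | x ∈ Pkl κ lam ∧ ∀ ξ ∈ x,
      txf hℵ ι x ∈ e ξ → (e ξ ∩ Sx ι x).Nonempty} ⊆ Pkl κ lam from fun x hx => hx.1)
    with h | h
  · exact h
  exfalso
  set P : Set lam.ord.ToType → lam.ord.ToType → Prop := fun x ξ =>
    ξ ∈ x ∧ txf hℵ ι x ∈ e ξ ∧ e ξ ∩ Sx ι x = ∅ with hP
  set gp : Set lam.ord.ToType → lam.ord.ToType := fun x =>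
    if h : ∃ ξ, P x ξ then h.choose else hne.some with hgp
  have hgpspec : ∀ x, (∃ ξ, P x ξ) → P x (gp x) := by
    intro x hx
    simp only [hgp, dif_pos hx]
    exact hx.choose_spec
  have hbadP : ∀ x ∈ Pkl κ lam \ {x | x ∈ Pkl κ lam ∧ ∀ ξ ∈ x,
      txf hℵ ι x ∈ e ξ → (e ξ ∩ Sx ι x).Nonempty}, ∃ ξ, P x ξ := by
    rintro x ⟨hx1, hx2⟩
    have : ¬ ∀ ξ ∈ x, txf hℵ ι x ∈ e ξ → (e ξ ∩ Sx ι x).Nonempty :=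
      fun hq => hx2 ⟨hx1, hq⟩
    push_neg at this
    obtain ⟨ξ, hξ, h1, h2⟩ := this
    exact ⟨ξ, hξ, h1, h2⟩
  obtain ⟨ξ₀, hB1⟩ := press hUF hnorm h (fun x hx => (hgpspec x (hbadP x hx)).1)
  obtain ⟨x₀, hx₀⟩ := uf_nonempty hUF hB1
  obtain ⟨-, hq₀2, -⟩ := hgpspec x₀ (hbadP x₀ hx₀.1)
  rw [hx₀.2] at hq₀2
  set tstar := txf hℵ ι x₀ with htstar
  obtain ⟨x₁, hx₁⟩ := uf_nonempty hUF (uf_inter hUF hB1 (fineT hℵ hne hUF hc hfine hnorm ι tstar))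
  obtain ⟨-, -, hq₁3⟩ := hgpspec x₁ (hbadP x₁ hx₁.1.1)
  rw [hx₁.1.2] at hq₁3
  have : tstar ∈ e ξ₀ ∩ Sx ι x₁ := ⟨hq₀2, hx₁.2.2⟩
  rw [hq₁3] at this
  exact this

theorem ae_NP : {x | x ∈ Pkl κ lam ∧ ∀ ξ ∈ x, ∀ s ∈ Sx ι x,
    txf hℵ ι x ∈ e ξ → e ξ ∩ Sx ι x ≠ {s}} ∈ W := by
  classical
  rcases uf_ultra hUF (show {x | x ∈ Pkl κ lam ∧ ∀ ξ ∈ x, ∀ s ∈ Sx ι x,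
      txf hℵ ι x ∈ e ξ → e ξ ∩ Sx ι x ≠ {s}} ⊆ Pkl κ lam from fun x hx => hx.1)
    with h | h
  · exact h
  exfalso
  set P : Set lam.ord.ToType → (lam.ord.ToType × κ.ord.ToType) → Prop := fun x p =>
    p.1 ∈ x ∧ p.2 ∈ Sx ι x ∧ txf hℵ ι x ∈ e p.1 ∧ e p.1 ∩ Sx ι x = {p.2} with hP
  set gp : Set lam.ord.ToType → lam.ord.ToType × κ.ord.ToType := fun x =>
    if h : ∃ p, P x p then h.choose else (hne.some, (hTne hℵ).some) with hgp
  have hgpspec : ∀ x, (∃ p, P x p) → P x (gp x) := by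
    intro x hx
    simp only [hgp, dif_pos hx]
    exact hx.choose_spec
  have hbadP : ∀ x ∈ Pkl κ lam \ {x | x ∈ Pkl κ lam ∧ ∀ ξ ∈ x, ∀ s ∈ Sx ι x,
      txf hℵ ι x ∈ e ξ → e ξ ∩ Sx ι x ≠ {s}}, ∃ p, P x p := by
    rintro x ⟨hx1, hx2⟩
    have : ¬ ∀ ξ ∈ x, ∀ s ∈ Sx ι x, txf hℵ ι x ∈ e ξ → e ξ ∩ Sx ι x ≠ {s} :=
      fun hq => hx2 ⟨hx1, hq⟩
    push_neg at this
    obtain ⟨ξ, hξ, s, hs, h1, h2⟩ := this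
    exact ⟨(ξ, s), hξ, hs, h1, h2⟩
  obtain ⟨ξ₀, hB1⟩ := press hUF hnorm h (fun x hx => (hgpspec x (hbadP x hx)).1)
  obtain ⟨a₀, hB2⟩ := press hUF hnorm hB1
    (fun x hx => (hgpspec x (hbadP x hx.1)).2.1)
  obtain ⟨x₀, hx₀⟩ := uf_nonempty hUF hB2
  set s₀ := (gp x₀).2 with hs₀def
  obtain ⟨-, -, hq₀3, hq₀4⟩ := hgpspec x₀ (hbadP x₀ hx₀.1.1)
  rw [hx₀.1.2] at hq₀3 hq₀4
  have ha₀ : a₀ = ι s₀ := hx₀.2.symm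
  -- every element of e ξ₀ equals s₀
  have hsub : e ξ₀ ⊆ {s₀} := by
    intro t ht
    obtain ⟨x₁, hx₁⟩ := uf_nonempty hUF (uf_inter hUF hB2 (fineT hℵ hne hUF hc hfine hnorm ι t))
    obtain ⟨-, -, -, hq₁4⟩ := hgpspec x₁ (hbadP x₁ hx₁.1.1.1)
    rw [hx₁.1.1.2] at hq₁4
    have hs₁ : (gp x₁).2 = s₀ := by
      have := hx₁.1.2
      rw [ha₀] at this
      exact ι.injective this
    rw [hs₁] at hq₁4
    have : t ∈ e ξ₀ ∩ Sx ι x₁ := ⟨ht, hx₁.2.2⟩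
    rw [hq₁4] at this
    exact this
  have h1 : txf hℵ ι x₀ = s₀ := hsub hq₀3
  have h2 : s₀ ∈ Sx ι x₀ := by
    have : s₀ ∈ e ξ₀ ∩ Sx ι x₀ := by rw [hq₀4]; rfl
    exact this.2
  rw [← h1] at h2
  exact tx_not_mem hℵ ι hx₀.1.1.1 h2

end AE2

end PartB

namespace PartB

open MenasAux

variable {κ lam : Cardinal.{0}} {W : Set (Set (Set lam.ord.ToType))}

/-- the derived ultrafilter on the trace -/
def Ux (hℵ : ℵ₀ < κ) (ι : κ.ord.ToType ↪ lam.ord.ToType)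
    (e : lam.ord.ToType ≃ Set κ.ord.ToType) (x : Set lam.ord.ToType) :
    Set (Set κ.ord.ToType) :=
  {B | B ⊆ Sx ι x ∧ ∃ ξ ∈ x, txf hℵ ι x ∈ e ξ ∧ e ξ ∩ Sx ι x = B}

/-- the global projected ultrafilter on the `κ`-part -/
def bigU (hℵ : ℵ₀ < κ) (ι : κ.ord.ToType ↪ lam.ord.ToType)
    (W : Set (Set (Set lam.ord.ToType))) : Set (Set κ.ord.ToType) :=
  {B | {x | x ∈ Pkl κ lam ∧ txf hℵ ι x ∈ B} ∈ W}

section AE3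

variable (hℵ : ℵ₀ < κ)
  (hne : Nonempty lam.ord.ToType)
  (hUF : IsUltrafilterOn (Pkl κ lam) W) (hc : IsKComplete κ W)
  (hfine : IsFine κ lam W) (hnorm : IsNormalOnPkl κ lam W)
  (ι : κ.ord.ToType ↪ lam.ord.ToType) (e : lam.ord.ToType ≃ Set κ.ord.ToType)

include hℵ hne hUF hc hfine hnorm

theorem bigU_not {B : Set κ.ord.ToType} (hB : B ∉ bigU hℵ ι W) :
    {x | x ∈ Pkl κ lam ∧ txf hℵ ι x ∉ B} ∈ W := by
  have h := uf_compl hUF (show {x | x ∈ Pkl κ lam ∧ txf hℵ ι x ∈ B} ⊆ Pkl κ lam from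
    fun x hx => hx.1) hB
  refine uf_superset hUF h (fun x hx => hx.1) ?_
  rintro x ⟨hx1, hx2⟩
  exact ⟨hx1, fun hh => hx2 ⟨hx1, hh⟩⟩

theorem bigU_sInter {𝒟 : Set (Set κ.ord.ToType)} (h1 : 𝒟.Nonempty) (h2 : #𝒟 < κ)
    (h3 : ∀ B ∈ 𝒟, B ∈ bigU hℵ ι W) : ⋂₀ 𝒟 ∈ bigU hℵ ι W := by
  obtain ⟨B₀, hB₀⟩ := h1
  have hfam : ⋂₀ ((fun B => {x | x ∈ Pkl κ lam ∧ txf hℵ ι x ∈ B}) '' 𝒟) ∈ W := by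
    apply hc _ ⟨_, Set.mem_image_of_mem _ hB₀⟩ (lt_of_le_of_lt Cardinal.mk_image_le h2)
    rintro X ⟨B, hB, rfl⟩
    exact h3 B hB
  have heq : ⋂₀ ((fun B => {x | x ∈ Pkl κ lam ∧ txf hℵ ι x ∈ B}) '' 𝒟)
      = {x | x ∈ Pkl κ lam ∧ txf hℵ ι x ∈ ⋂₀ 𝒟} := by
    ext x
    simp only [Set.mem_sInter, Set.mem_image, forall_exists_index, and_imp,
      Set.mem_setOf_eq]
    constructor
    · intro hx
      exact ⟨(hx _ B₀ hB₀ rfl).1, fun B hB => (hx _ B hB rfl).2⟩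
    · rintro ⟨hx1, hx2⟩ X B hB rfl
      exact ⟨hx1, hx2 B hB⟩
  rw [heq] at hfam
  exact hfam

theorem ae_E (B : Set κ.ord.ToType) :
    {x | x ∈ Pkl κ lam ∧ ((B ∩ Sx ι x) ∈ Ux hℵ ι e x ↔ B ∈ bigU hℵ ι W)} ∈ W := by
  by_cases hB : B ∈ bigU hℵ ι W
  · have h1 : {x | x ∈ Pkl κ lam ∧ txf hℵ ι x ∈ B} ∈ W := hB
    have h2 := hfine (e.symm B)
    refine uf_superset hUF (uf_inter hUF h1 h2) ?_ ?_
    · rintro x ⟨hx1, -⟩; exact hx1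
    rintro x ⟨⟨hx1, hx2⟩, hx3⟩
    refine ⟨hx1, iff_of_true ?_ hB⟩
    refine ⟨Set.inter_subset_right, e.symm B, hx3.2, ?_, ?_⟩
    · rw [Equiv.apply_symm_apply]; exact hx2
    · rw [Equiv.apply_symm_apply]
  · have h1 := bigU_not hℵ hne hUF hc hfine hnorm ι hB
    have h2 := hfine (e.symm B)
    have h3 := ae_Q hℵ hne hUF hc hfine hnorm ι e
    refine uf_superset hUF (uf_inter3 hUF h1 h2 h3) ?_ ?_
    · rintro x ⟨hx1, -⟩; exact hx1
    rintro x ⟨⟨⟨hx1, hx2⟩, hx3⟩, hx4⟩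
    refine ⟨hx1, iff_of_false ?_ hB⟩
    rintro ⟨hBs, ζ, hζ, htζ, htrace⟩
    have hQ := hx4.2 ζ hζ (e.symm B) hx3.2
    rw [Equiv.apply_symm_apply, htrace] at hQ
    exact hx2 (hQ subset_rfl htζ)

theorem ae_complete :
    {x | x ∈ Pkl κ lam ∧ IsKComplete (#(Set.Iio (txf hℵ ι x))) (Ux hℵ ι e x)} ∈ W := by
  classical
  -- the pairing function on the κ-part
  have hTT : #(κ.ord.ToType × κ.ord.ToType) = #κ.ord.ToType := by
    simp only [Cardinal.mk_prod, Cardinal.lift_id, Cardinal.mk_ord_toType]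
    exact Cardinal.mul_eq_self (le_of_lt hℵ)
  obtain ⟨qe⟩ := Cardinal.eq.1 hTT
  set qT : κ.ord.ToType → κ.ord.ToType → κ.ord.ToType := fun a b => qe (a, b) with hqT
  have hqinj : ∀ a b a' b', qT a b = qT a' b' → a = a' ∧ b = b' := by
    intro a b a' b' h
    have := qe.injective h
    exact ⟨congrArg Prod.fst this, congrArg Prod.snd this⟩
  rcases uf_ultra hUF (show {x | x ∈ Pkl κ lam ∧
      IsKComplete (#(Set.Iio (txf hℵ ι x))) (Ux hℵ ι e x)} ⊆ Pkl κ lam from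
    fun x hx => hx.1) with hgoal | hcompl
  · exact hgoal
  exfalso
  have hdn := ae_dn hℵ hne hUF hc hfine hnorm ι
  have hcov := ae_cov hℵ hne hUF hc hfine hnorm ι e
  have hqcl := ae_closedT2 hℵ hne hUF hc hfine hnorm ι qT
  set bad := Pkl κ lam \ {x | x ∈ Pkl κ lam ∧
      IsKComplete (#(Set.Iio (txf hℵ ι x))) (Ux hℵ ι e x)} ∩
      {x | x ∈ Pkl κ lam ∧ Dn ι x} ∩ {x | x ∈ Pkl κ lam ∧ Cov ι e x} ∩
      {x | x ∈ Pkl κ lam ∧ ∀ t ∈ Sx ι x, ∀ u ∈ Sx ι x, qT t u ∈ Sx ι x} with hbaddef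
  have hbadW : bad ∈ W := uf_inter hUF (uf_inter3 hUF hcompl hdn hcov) hqcl
  -- choice of a bad family
  set SS : Set lam.ord.ToType → Set (Set κ.ord.ToType) := fun x =>
    if h : ∃ S : Set (Set κ.ord.ToType), S.Nonempty ∧ #S < #(Set.Iio (txf hℵ ι x)) ∧
        (∀ B ∈ S, B ∈ Ux hℵ ι e x) ∧ ⋂₀ S ∉ Ux hℵ ι e x then h.choose else ∅ with hSS
  have hSSspec : ∀ x ∈ bad, (SS x).Nonempty ∧ #(SS x) < #(Set.Iio (txf hℵ ι x)) ∧
      (∀ B ∈ SS x, B ∈ Ux hℵ ι e x) ∧ ⋂₀ (SS x) ∉ Ux hℵ ι e x := by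
    intro x hx
    have hnc : ¬ IsKComplete (#(Set.Iio (txf hℵ ι x))) (Ux hℵ ι e x) :=
      fun hcc => hx.1.1.1.2 ⟨hx.1.1.1.1, hcc⟩
    have hnc' : ¬ ∀ S : Set (Set κ.ord.ToType), S.Nonempty →
        #S < #(Set.Iio (txf hℵ ι x)) → (∀ X ∈ S, X ∈ Ux hℵ ι e x) →
          ⋂₀ S ∈ Ux hℵ ι e x := hnc
    push_neg at hnc'
    obtain ⟨S, h1, h2, h3, h4⟩ := hnc' 
    have hex : ∃ S : Set (Set κ.ord.ToType), S.Nonempty ∧ #S < #(Set.Iio (txf hℵ ι x)) ∧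
        (∀ B ∈ S, B ∈ Ux hℵ ι e x) ∧ ⋂₀ S ∉ Ux hℵ ι e x := ⟨S, h1, h2, h3, h4⟩
    simp only [hSS, dif_pos hex]
    exact hex.choose_spec
  -- pressing the size of the family
  set sfun : Set lam.ord.ToType → κ.ord.ToType := fun x =>
    if h : ∃ s, s < txf hℵ ι x ∧ #(Set.Iio s) = #(SS x) then h.choose
    else (hTne hℵ).some with hsfun
  have hsfunspec : ∀ x ∈ bad, sfun x < txf hℵ ι x ∧ #(Set.Iio (sfun x)) = #(SS x) := by
    intro x hx
    have hex : ∃ s, s < txf hℵ ι x ∧ #(Set.Iio s) = #(SS x) :=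
      MenasAux.exists_card_Iio_lt (hSSspec x hx).2.1
    simp only [hsfun, dif_pos hex]
    exact hex.choose_spec
  have hsmem : ∀ x ∈ bad, sfun x ∈ Sx ι x := by
    intro x hx
    rw [Sx_eq_Iio hℵ ι hx.1.1.1.1 hx.1.1.2.2]
    exact (hsfunspec x hx).1
  obtain ⟨a₀, hB1⟩ := press hUF hnorm hbadW (fun x hx => hsmem x hx)
  obtain ⟨xw, hxw⟩ := uf_nonempty hUF hB1
  set sstar := sfun xw with hsstar
  have ha₀ : a₀ = ι sstar := hxw.2.symm
  have hsconst : ∀ x ∈ bad ∩ {x | ι (sfun x) = a₀}, sfun x = sstar := by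
    rintro x ⟨-, hx2⟩
    apply ι.injective
    rw [hx2, ha₀]
  -- enumeration of the family
  set benum : Set lam.ord.ToType → ↥(Set.Iio sstar) → Set κ.ord.ToType := fun x =>
    if h : Nonempty (↥(Set.Iio sstar) ≃ ↥(SS x)) then fun i => (h.some i : Set κ.ord.ToType)
    else fun _ => ∅ with hbenum
  have hbenumspec : ∀ x ∈ bad ∩ {x | ι (sfun x) = a₀},
      (∀ i, benum x i ∈ SS x) ∧ (∀ B ∈ SS x, ∃ i, benum x i = B) := by
    intro x hx
    have hcards : #(Set.Iio sstar) = #(SS x) := by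
      rw [← hsconst x hx]
      exact (hsfunspec x hx.1).2
    have hne2 : Nonempty (↥(Set.Iio sstar) ≃ ↥(SS x)) := Cardinal.eq.1 hcards
    constructor
    · intro i
      simp only [hbenum, dif_pos hne2]
      exact (hne2.some i).2
    · intro B hB
      refine ⟨hne2.some.symm ⟨B, hB⟩, ?_⟩
      simp only [hbenum, dif_pos hne2, Equiv.apply_symm_apply]
  -- coding the family as a subset of the trace
  set Rx : Set lam.ord.ToType → Set κ.ord.ToType := fun x =>
    ⋃ i : ↥(Set.Iio sstar), (fun t => qT i.1 t) '' (benum x i) with hRx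
  have hRxsub : ∀ x ∈ bad ∩ {x | ι (sfun x) = a₀}, Rx x ⊆ Sx ι x := by
    intro x hx z hz
    simp only [hRx, Set.mem_iUnion] at hz
    obtain ⟨i, t, ht, rfl⟩ := hz
    have his : (i : κ.ord.ToType) ∈ Sx ι x := by
      rw [Sx_eq_Iio hℵ ι hx.1.1.1.1.1 hx.1.1.1.2.2]
      have h1 : (i : κ.ord.ToType) < sstar := i.2
      exact lt_trans h1 ((hsconst x hx) ▸ (hsfunspec x hx.1).1)
    have hts : t ∈ Sx ι x := by
      have hBU := (hSSspec x hx.1).2.2.1 _ ((hbenumspec x hx).1 i)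
      exact hBU.1 ht
    exact hx.1.2.2 _ his _ hts
  -- pressing the code
  set rfun : Set lam.ord.ToType → lam.ord.ToType := fun x =>
    if h : ∃ ρ ∈ x, e ρ ∩ Sx ι x = Rx x then h.choose else hne.some with hrfun
  have hrfunspec : ∀ x ∈ bad ∩ {x | ι (sfun x) = a₀},
      rfun x ∈ x ∧ e (rfun x) ∩ Sx ι x = Rx x := by
    intro x hx
    have hex : ∃ ρ ∈ x, e ρ ∩ Sx ι x = Rx x :=
      hx.1.1.2.2 (Rx x) (hRxsub x hx)
    simp only [hrfun, dif_pos hex]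
    obtain ⟨h1, h2⟩ := hex.choose_spec
    exact ⟨h1, h2⟩
  obtain ⟨ρ₀, hB2⟩ := press hUF hnorm hB1 (fun x hx => (hrfunspec x hx).1)
  set Rt := e ρ₀ with hRt
  set Dt : ↥(Set.Iio sstar) → Set κ.ord.ToType := fun i => {t | qT i.1 t ∈ Rt} with hDt
  -- decoding
  have hdecode : ∀ x ∈ bad ∩ {x | ι (sfun x) = a₀} ∩ {x | rfun x = ρ₀},
      ∀ i, benum x i = Dt i ∩ Sx ι x := by
    rintro x ⟨hx1, hx2⟩ i
    have hR : Rt ∩ Sx ι x = Rx x := by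
      rw [hRt, ← hx2]
      exact (hrfunspec x hx1).2
    ext t
    constructor
    · intro ht
      have htS : t ∈ Sx ι x := by
        have hBU := (hSSspec x hx1.1).2.2.1 _ ((hbenumspec x hx1).1 i)
        exact hBU.1 ht
      have hzR : qT i.1 t ∈ Rx x := by
        simp only [hRx, Set.mem_iUnion]
        exact ⟨i, t, ht, rfl⟩
      have : qT i.1 t ∈ Rt := by
        rw [← hR] at hzR
        exact hzR.1
      exact ⟨this, htS⟩
    · rintro ⟨htD, htS⟩
      -- qT i t ∈ Rt and qT i t ∈ Sx, so it is in Rx x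
      have his : (i : κ.ord.ToType) ∈ Sx ι x := by
        rw [Sx_eq_Iio hℵ ι hx1.1.1.1.1.1 hx1.1.1.1.2.2]
        have h1 : (i : κ.ord.ToType) < sstar := i.2
        exact lt_trans h1 ((hsconst x hx1) ▸ (hsfunspec x hx1.1).1)
      have hq : qT i.1 t ∈ Sx ι x := hx1.1.2.2 _ his _ htS
      have : qT i.1 t ∈ Rx x := by
        rw [← hR]
        exact ⟨htD, hq⟩
      simp only [hRx, Set.mem_iUnion] at this
      obtain ⟨i', t', htp, heq⟩ := this
      obtain ⟨hii, htt⟩ := hqinj _ _ _ _ heq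
      have hieq : i' = i := Subtype.ext hii
      subst hieq
      subst htt
      exact htp
  -- each piece is in the global ultrafilter
  obtain ⟨xnn, hxnn⟩ := uf_nonempty hUF hB2
  have hIionn : Nonempty (↥(Set.Iio sstar)) := by
    have h1 := (hSSspec xnn hxnn.1.1).1
    have h2 : #(Set.Iio sstar) = #(SS xnn) := by
      rw [← hsconst xnn hxnn.1]
      exact (hsfunspec xnn hxnn.1.1).2
    rw [← Cardinal.mk_ne_zero_iff, h2, Cardinal.mk_ne_zero_iff]
    exact ⟨⟨h1.some, h1.some_mem⟩⟩
  have hDtU : ∀ i, Dt i ∈ bigU hℵ ι W := by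
    intro i
    have hEi := ae_E hℵ hne hUF hc hfine hnorm ι e (Dt i)
    obtain ⟨x, hx⟩ := uf_nonempty hUF (uf_inter hUF hB2 hEi)
    have hdec := hdecode x hx.1 i
    have hBU := (hSSspec x hx.1.1.1).2.2.1 _ ((hbenumspec x hx.1.1).1 i)
    rw [hdec] at hBU
    exact (hx.2.2).1 hBU
  -- the intersection
  set Dhat := ⋂₀ (Set.range Dt) with hDhat
  have hDhatU : Dhat ∈ bigU hℵ ι W := by
    apply bigU_sInter hℵ hne hUF hc hfine hnorm ι (Set.range_nonempty Dt)
    · refine lt_of_le_of_lt Cardinal.mk_range_le ?_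
      exact MenasAux.mk_Iio_lt sstar
    · rintro B ⟨i, rfl⟩
      exact hDtU i
  have hEhat := ae_E hℵ hne hUF hc hfine hnorm ι e Dhat
  obtain ⟨x, hx⟩ := uf_nonempty hUF (uf_inter hUF hB2 hEhat)
  have hfin : Dhat ∩ Sx ι x ∈ Ux hℵ ι e x := (hx.2.2).2 hDhatU
  have hId : Dhat ∩ Sx ι x = ⋂₀ (SS x) := by
    ext z
    simp only [hDhat, Set.mem_inter_iff, Set.mem_sInter, Set.mem_range,
      forall_exists_index]
    constructor
    · rintro ⟨hz1, hz2⟩ B hB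
      obtain ⟨i, hi⟩ := (hbenumspec x hx.1.1).2 B hB
      rw [← hi, hdecode x hx.1 i]
      exact ⟨hz1 _ i rfl, hz2⟩
    · intro hz
      constructor
      · rintro B i rfl
        have := hz _ ((hbenumspec x hx.1.1).1 i)
        rw [hdecode x hx.1 i] at this
        exact this.1
      · obtain ⟨i⟩ := hIionn
        have := hz _ ((hbenumspec x hx.1.1).1 i)
        rw [hdecode x hx.1 i] at this
        exact this.2
  rw [hId] at hfin
  exact (hSSspec x hx.1.1.1).2.2.2 hfin

end AE3

end PartB

namespace MenasAux

/-- transfer a complete nonprincipal ultrafilter along a bijection -/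
theorem transfer {T' β : Type} {S : Set T'} {U : Set (Set T')}
    (hUF : IsUltrafilterOn S U) {κ' : Cardinal.{0}} (hcomp : IsKComplete κ' U)
    (hnp : ∀ s ∈ S, ({s} : Set T') ∉ U) (ψ : β ≃ ↥S) :
    ∃ F : Set (Set β), IsUltrafilterOn Set.univ F ∧ IsKComplete κ' F ∧
      ∀ a : β, ({a} : Set β) ∉ F := by
  set j : β → T' := fun b => (ψ b : T') with hj
  have hjinj : Function.Injective j := by
    intro a b h
    exact ψ.injective (Subtype.ext h)
  have hrange : Set.range j = S := by
    ext z
    constructor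
    · rintro ⟨b, rfl⟩; exact (ψ b).2
    · intro hz; exact ⟨ψ.symm ⟨z, hz⟩, by simp [hj]⟩
  refine ⟨{A | j '' A ∈ U}, ⟨?_, ?_, ?_, ?_, ?_, ?_⟩, ?_, ?_⟩
  · exact fun X _ => Set.subset_univ X
  · show j '' Set.univ ∈ U
    rw [Set.image_univ, hrange]
    exact uf_carrier hUF
  · show ¬ (j '' ∅ ∈ U)
    rw [Set.image_empty]
    exact uf_empty hUF
  · intro X hX Y _ hXY
    refine uf_superset hUF hX ?_ (Set.image_mono hXY)
    rintro z ⟨b, -, rfl⟩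
    rw [← hrange]; exact ⟨b, rfl⟩
  · intro X hX Y hY
    show j '' (X ∩ Y) ∈ U
    rw [Set.image_inter hjinj]
    exact uf_inter hUF hX hY
  · intro X _
    have hXS : j '' X ⊆ S := by
      rintro z ⟨b, -, rfl⟩
      rw [← hrange]; exact ⟨b, rfl⟩
    rcases uf_ultra hUF hXS with h | h
    · exact Or.inl h
    · right
      show j '' (Set.univ \ X) ∈ U
      have heq : j '' (Set.univ \ X) = S \ (j '' X) := by
        ext z
        constructor
        · rintro ⟨b, ⟨-, hb⟩, rfl⟩
          refine ⟨by rw [← hrange]; exact ⟨b, rfl⟩, ?_⟩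
          rintro ⟨b', hb', hbb⟩
          exact hb (hjinj hbb ▸ hb')
        · rintro ⟨hz1, hz2⟩
          rw [← hrange] at hz1
          obtain ⟨b, rfl⟩ := hz1
          exact ⟨b, ⟨trivial, fun hbX => hz2 ⟨b, hbX, rfl⟩⟩, rfl⟩
      rw [heq]
      exact h
  · intro S' hS'ne hS'card hS'F
    show j '' (⋂₀ S') ∈ U
    obtain ⟨X₀, hX₀⟩ := hS'ne
    have heq : j '' (⋂₀ S') = ⋂₀ ((Set.image j) '' S') := by
      ext z
      simp only [Set.mem_sInter, Set.mem_image, forall_exists_index, and_imp]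
      constructor
      · rintro ⟨b, hb, rfl⟩ Y X hX rfl
        exact ⟨b, hb X hX, rfl⟩
      · intro hz
        obtain ⟨b₀, hb₀, hbz⟩ := hz _ X₀ hX₀ rfl
        refine ⟨b₀, ?_, hbz⟩
        intro X hX
        obtain ⟨b, hb, hbz'⟩ := hz _ X hX rfl
        rwa [hjinj (hbz'.trans hbz.symm)] at hb
    rw [heq]
    apply hcomp _ ⟨_, Set.mem_image_of_mem _ hX₀⟩
      (lt_of_le_of_lt Cardinal.mk_image_le hS'card)
    rintro Y ⟨X, hX, rfl⟩
    exact hS'F X hX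
  · intro a hA
    have : j '' {a} = {j a} := Set.image_singleton
    rw [Set.mem_setOf_eq, this] at hA
    exact hnp (j a) (by rw [← hrange]; exact ⟨a, rfl⟩) hA

end MenasAux

namespace PartB

open MenasAux

theorem partB {κ : Cardinal.{0}} (hℵ : ℵ₀ < κ)
    {D : Set (Set κ.ord.ToType)} (hUFD : IsUltrafilterOn Set.univ D)
    (hcompD : IsKComplete κ D) (hnpD : ∀ a : κ.ord.ToType, ({a} : Set κ.ord.ToType) ∉ D)
    (hunb : ∀ β : Cardinal.{0}, β < κ →
      ∃ γ : Cardinal.{0}, β ≤ γ ∧ γ < κ ∧ IsSupercompactCard γ)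
    (hleast : ∀ κ' : Cardinal.{0}, κ' < κ →
      ¬ (IsMeasurableCard κ' ∧ ∀ β : Cardinal.{0}, β < κ' →
          ∃ γ : Cardinal.{0}, β ≤ γ ∧ γ < κ' ∧ IsSupercompactCard γ)) :
    ¬ IsLamSupercompact κ (2 ^ κ) := by
  rintro ⟨W, hUF, hc, hfine, hnorm⟩
  have hκlam : κ ≤ 2 ^ κ := (Cardinal.cantor κ).le
  have hlamℵ : ℵ₀ < 2 ^ κ := lt_of_lt_of_le hℵ hκlam
  have hne : Nonempty (2 ^ κ : Cardinal.{0}).ord.ToType := hTne hlamℵ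
  obtain ⟨ι⟩ : Nonempty (κ.ord.ToType ↪ (2 ^ κ : Cardinal.{0}).ord.ToType) := by
    rw [← Cardinal.le_def, Cardinal.mk_ord_toType, Cardinal.mk_ord_toType]
    exact hκlam
  obtain ⟨e⟩ : Nonempty ((2 ^ κ : Cardinal.{0}).ord.ToType ≃ Set κ.ord.ToType) := by
    rw [← Cardinal.eq, Cardinal.mk_ord_toType, Cardinal.mk_set, Cardinal.mk_ord_toType]
  -- the supercompact-reaching function on the κ-part
  have hsch : ∀ t : κ.ord.ToType, ∃ γ, Order.succ (#(Set.Iio t)) ≤ γ ∧ γ < κ ∧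
      IsSupercompactCard γ := by
    intro t
    apply hunb
    exact lt_of_le_of_lt (Order.succ_le_of_lt (Cardinal.cantor _))
      (strong_limit hℵ hUFD hcompD hnpD (mk_Iio_lt t))
  choose γf hγ1 hγ2 hγ3 using hsch
  have hhf : ∀ t : κ.ord.ToType, ∃ s : κ.ord.ToType, #(Set.Iio s) = γf t :=
    fun t => exists_card_Iio (hγ2 t)
  choose hf hhfspec using hhf
  -- a point with uncountably many predecessors
  have hsuccℵ : Order.succ ℵ₀ < κ :=
    lt_of_le_of_lt (Order.succ_le_of_lt (Cardinal.cantor _))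
      (strong_limit hℵ hUFD hcompD hnpD hℵ)
  obtain ⟨s₁, hs₁⟩ := exists_card_Iio (κ := κ) hsuccℵ
  -- the complement and intersection codes
  set cC : (2 ^ κ : Cardinal.{0}).ord.ToType → (2 ^ κ : Cardinal.{0}).ord.ToType :=
    fun ξ => e.symm ((e ξ)ᶜ) with hcC
  set mC : (2 ^ κ : Cardinal.{0}).ord.ToType → (2 ^ κ : Cardinal.{0}).ord.ToType →
      (2 ^ κ : Cardinal.{0}).ord.ToType := fun ξ ζ => e.symm (e ξ ∩ e ζ) with hmC
  -- gather the measure one sets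
  obtain ⟨x, hxdn, hxcov, hxNE, hxNP, hxcomp, hxuni, hxc, hxm, hxhf, hxs₁⟩ :=
    uf_nonempty hUF (uf_inter hUF (ae_dn hℵ hne hUF hc hfine hnorm ι)
      (uf_inter hUF (ae_cov hℵ hne hUF hc hfine hnorm ι e)
      (uf_inter hUF (ae_NE hℵ hne hUF hc hfine hnorm ι e)
      (uf_inter hUF (ae_NP hℵ hne hUF hc hfine hnorm ι e)
      (uf_inter hUF (ae_complete hℵ hne hUF hc hfine hnorm ι e)
      (uf_inter hUF (hfine (e.symm Set.univ))
      (uf_inter hUF (ae_closed_unary hne hUF hnorm hfine cC)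
      (uf_inter hUF (ae_closed_binary hne hUF hnorm hfine mC)
      (uf_inter hUF (ae_closedT hℵ hne hUF hc hfine hnorm ι hf)
        (fineT hℵ hne hUF hc hfine hnorm ι s₁))))))))))
  have hxPkl : x ∈ Pkl κ (2 ^ κ) := hxdn.1
  set tx := txf hℵ ι x with htx
  have hSIio : Sx ι x = Set.Iio tx := Sx_eq_Iio hℵ ι hxPkl hxdn.2
  set κ' := #(Set.Iio tx) with hκ'
  have hκ'κ : κ' < κ := mk_Iio_lt tx
  have hκ'ℵ : ℵ₀ < κ' := by
    have h1 : s₁ ∈ Sx ι x := hxs₁.2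
    rw [hSIio, Set.mem_Iio] at h1
    have h2 : Set.Iio s₁ ⊆ Set.Iio tx := fun z hz => lt_trans hz h1
    have h3 : Order.succ ℵ₀ ≤ κ' := by
      rw [← hs₁]
      exact Cardinal.mk_le_mk_of_subset h2
    exact lt_of_lt_of_le (Order.lt_succ _) h3
  -- the ultrafilter axioms
  have hUFx : IsUltrafilterOn (Sx ι x) (Ux hℵ ι e x) := by
    refine ⟨fun B hB => hB.1, ?_, ?_, ?_, ?_, ?_⟩
    · -- carrier
      refine ⟨subset_rfl, e.symm Set.univ, hxuni.2, ?_, ?_⟩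
      · rw [Equiv.apply_symm_apply]; trivial
      · rw [Equiv.apply_symm_apply]; exact Set.univ_inter _
    · -- empty
      rintro ⟨-, ξ, hξ, htξ, htr⟩
      have := hxNE.2 ξ hξ htξ
      rw [htr] at this
      exact Set.not_nonempty_empty this
    · -- superset
      rintro B ⟨hBs, ξ, hξ, htξ, htr⟩ Y hYs hBY
      obtain ⟨ζ, hζ, htrY⟩ := hxcov.2 Y hYs
      by_cases htζ : tx ∈ e ζ
      · exact ⟨hYs, ζ, hζ, htζ, htrY⟩
      · exfalso
        have hmem : mC ξ (cC ζ) ∈ x := hxm.2 ξ hξ (cC ζ) (hxc.2 ζ hζ)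
        have hemC : e (mC ξ (cC ζ)) = e ξ ∩ (e ζ)ᶜ := by
          rw [hmC, Equiv.apply_symm_apply, hcC, Equiv.apply_symm_apply]
        have htmem : tx ∈ e (mC ξ (cC ζ)) := by
          rw [hemC]; exact ⟨htξ, htζ⟩
        obtain ⟨z, hz⟩ := hxNE.2 _ hmem htmem
        rw [hemC] at hz
        have hzB : z ∈ B := by
          rw [← htr]; exact ⟨hz.1.1, hz.2⟩
        have hzY : z ∈ Y := hBY hzB
        have hzζ : z ∈ e ζ := by
          have : z ∈ e ζ ∩ Sx ι x := by rw [htrY]; exact hzY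
          exact this.1
        exact hz.1.2 hzζ
    · -- intersection
      rintro B₁ ⟨hB₁s, ξ₁, hξ₁, htξ₁, htr₁⟩ B₂ ⟨hB₂s, ξ₂, hξ₂, htξ₂, htr₂⟩
      refine ⟨fun z hz => hB₁s hz.1, mC ξ₁ ξ₂, hxm.2 ξ₁ hξ₁ ξ₂ hξ₂, ?_, ?_⟩
      · rw [hmC, Equiv.apply_symm_apply]; exact ⟨htξ₁, htξ₂⟩
      · rw [hmC, Equiv.apply_symm_apply, ← htr₁, ← htr₂]
        ext z
        simp only [Set.mem_inter_iff]
        tauto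
    · -- ultra
      intro B hBs
      obtain ⟨ξ, hξ, htr⟩ := hxcov.2 B hBs
      by_cases htξ : tx ∈ e ξ
      · exact Or.inl ⟨hBs, ξ, hξ, htξ, htr⟩
      · right
        refine ⟨Set.diff_subset, cC ξ, hxc.2 ξ hξ, ?_, ?_⟩
        · rw [hcC, Equiv.apply_symm_apply]; exact htξ
        · rw [hcC, Equiv.apply_symm_apply, ← htr]
          ext z
          simp only [Set.mem_inter_iff, Set.mem_diff, Set.mem_compl_iff]
          tauto
  have hcompx : IsKComplete κ' (Ux hℵ ι e x) := hxcomp.2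
  have hnpx : ∀ s ∈ Sx ι x, ({s} : Set κ.ord.ToType) ∉ Ux hℵ ι e x := by
    rintro s hs ⟨-, ξ, hξ, htξ, htr⟩
    exact hxNP.2 ξ hξ s hs htξ htr
  -- transfer to the canonical type
  obtain ⟨ψ⟩ : Nonempty (κ'.ord.ToType ≃ ↥(Sx ι x)) := by
    rw [← Cardinal.eq, Cardinal.mk_ord_toType, hSIio]
  obtain ⟨F, hF1, hF2, hF3⟩ := transfer hUFx hcompx hnpx ψ
  have hmeas : IsMeasurableCard κ' := ⟨hκ'ℵ, F, hF1, hF2, hF3⟩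
  -- supercompact cardinals are unbounded below κ'
  have hunb' : ∀ β : Cardinal.{0}, β < κ' →
      ∃ γ : Cardinal.{0}, β ≤ γ ∧ γ < κ' ∧ IsSupercompactCard γ := by
    intro β hβ
    obtain ⟨s, hslt, hscard⟩ := exists_card_Iio_lt (hκ' ▸ hβ)
    have hsS : s ∈ Sx ι x := by rw [hSIio]; exact hslt
    have hfs : hf s ∈ Sx ι x := hxhf.2 s hsS
    have hffs : hf (hf s) ∈ Sx ι x := hxhf.2 _ hfs
    have hγles : ∀ u : κ.ord.ToType, u ∈ Sx ι x → #(Set.Iio u) ≤ κ' := by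
      intro u hu
      rw [hSIio, Set.mem_Iio] at hu
      exact Cardinal.mk_le_mk_of_subset (fun z hz => lt_trans hz hu)
    have h1 : γf s ≤ κ' := by
      rw [← hhfspec s]
      exact hγles _ hfs
    have h2 : γf (hf s) ≤ κ' := by
      rw [← hhfspec (hf s)]
      exact hγles _ hffs
    have h3 : γf s < γf (hf s) :=
      lt_of_lt_of_le (lt_of_lt_of_le (Order.lt_succ _)
        (by rw [← hhfspec s]; exact hγ1 (hf s))) le_rfl
    refine ⟨γf s, ?_, lt_of_lt_of_le h3 h2, hγ3 s⟩
    calc β = #(Set.Iio s) := hscard.symm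
    _ ≤ Order.succ (#(Set.Iio s)) := le_of_lt (Order.lt_succ _)
    _ ≤ γf s := hγ1 s
  exact hleast κ' hκ'κ ⟨hmeas, hunb'⟩

end PartB

/-- If `κ` is the least measurable cardinal such that the set of
supercompact cardinals below `κ` is unbounded in `κ`, then `κ` is strongly compact but
not `2^κ` supercompact. -/
theorem least_measurable_limit_of_supercompact_stronglyCompact_not_two_pow_supercompact
    (κ : Cardinal.{0})
    (hmeas : IsMeasurableCard κ)
    (hunb : ∀ β : Cardinal.{0}, β < κ →
      ∃ γ : Cardinal.{0}, β ≤ γ ∧ γ < κ ∧ IsSupercompactCard γ)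
    (hleast : ∀ κ' : Cardinal.{0}, κ' < κ →
      ¬ (IsMeasurableCard κ' ∧ ∀ β : Cardinal.{0}, β < κ' →
          ∃ γ : Cardinal.{0}, β ≤ γ ∧ γ < κ' ∧ IsSupercompactCard γ)) :
    IsStronglyCompactCard κ ∧ ¬ IsLamSupercompact κ (2 ^ κ) := by
  obtain ⟨hℵ, D, hUFD, hcompD, hnpD⟩ := hmeas
  exact ⟨PartA.partA hℵ hUFD hcompD hnpD hunb,
    PartB.partB hℵ hUFD hcompD hnpD hunb hleast⟩
end

section
/- Let κ be a measurable cardinal, μ a κ-complete nonprincipal ultrafilter on κ, λ ≥ κ a cardinal, ⟨κ_α : α < κ⟩ an increasing sequence of cardinals below κ, and for each α < κ let μ_α be a κ_α-complete fine ultrafilter on P_{κ_α}(λ). Then the family U_λ of all X ⊆ P_κ(λ) such that {α < κ : X ∩ P_{κ_α}(λ) ∈ μ_α} ∈ μ is a κ-complete fine ultrafilter on P_κ(λ). -/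
open Cardinal

/-- **Menas.** Let `κ` be measurable, `μ` a `κ`-complete nonprincipal
ultrafilter on `κ`, `λ ≥ κ`, `⟨κ_α : α < κ⟩` an increasing sequence of cardinals below
`κ`, and for each `α < κ` let `μ_α` be a `κ_α`-complete fine ultrafilter on `P_{κ_α}(λ)`.
Then `U_λ = {X ⊆ P_κ(λ) : {α < κ : X ∩ P_{κ_α}(λ) ∈ μ_α} ∈ μ}` is a `κ`-complete fine
ultrafilter on `P_κ(λ)`. -/
theorem menas_ultrafilter (κ lam : Cardinal.{0})
    (hκ : IsMeasurableCard κ) (hkle : κ ≤ lam)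
    (μ : Set (Set κ.ord.ToType))
    (hμ : IsUltrafilterOn Set.univ μ) (hμc : IsKComplete κ μ)
    (hμnp : ∀ a : κ.ord.ToType, ({a} : Set κ.ord.ToType) ∉ μ)
    (k : κ.ord.ToType → Cardinal.{0})
    (hkinc : ∀ a b : κ.ord.ToType, a < b → k a < k b)
    (hklt : ∀ a : κ.ord.ToType, k a < κ)
    (m : κ.ord.ToType → Set (Set (Set lam.ord.ToType)))
    (hm : ∀ a : κ.ord.ToType,
      IsUltrafilterOn (Pkl (k a) lam) (m a) ∧ IsKComplete (k a) (m a) ∧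
        IsFine (k a) lam (m a)) :
    IsUltrafilterOn (Pkl κ lam)
        {X | X ⊆ Pkl κ lam ∧ {a : κ.ord.ToType | {p ∈ X | #p < k a} ∈ m a} ∈ μ} ∧
      IsKComplete κ
        {X | X ⊆ Pkl κ lam ∧ {a : κ.ord.ToType | {p ∈ X | #p < k a} ∈ m a} ∈ μ} ∧
      IsFine κ lam
        {X | X ⊆ Pkl κ lam ∧ {a : κ.ord.ToType | {p ∈ X | #p < k a} ∈ m a} ∈ μ} := by
  obtain ⟨hμA, hμtop, hμbot, hμup, hμint, hμsplit⟩ := hμ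
  -- restriction of Pkl κ to Pkl (k a)
  have hPkl_restrict : ∀ a : κ.ord.ToType,
      {p ∈ Pkl κ lam | #p < k a} = Pkl (k a) lam := by
    intro a
    ext p
    simp only [Pkl, Set.mem_setOf_eq, Set.sep_setOf]
    exact ⟨fun h => h.2, fun h => ⟨h.trans (hklt a), h⟩⟩
  have hr_sub : ∀ (a : κ.ord.ToType) (X : Set (Set lam.ord.ToType)),
      {p ∈ X | #p < k a} ⊆ Pkl (k a) lam := by
    intro a X p hp; exact hp.2
  -- small sets are not in μ
  have hsmall : ∀ T : Set κ.ord.ToType, #T < κ → T ∉ μ := by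
    intro T hT hTμ
    rcases Set.eq_empty_or_nonempty T with h | h
    · exact hμbot (h ▸ hTμ)
    · set S : Set (Set κ.ord.ToType) := (fun t => {t}ᶜ) '' T with hS
      have hSne : S.Nonempty := h.image _
      have hScard : #S < κ := lt_of_le_of_lt Cardinal.mk_image_le hT
      have hSmem : ∀ X ∈ S, X ∈ μ := by
        rintro X ⟨t, _, rfl⟩
        rcases hμsplit {t} (Set.subset_univ _) with h1 | h1
        · exact absurd h1 (hμnp t)
        · simpa [Set.compl_eq_univ_diff] using h1
      have hInt := hμc S hSne hScard hSmem
      have hint : ⋂₀ S = Tᶜ := by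
        ext x
        simp only [hS, Set.sInter_image, Set.mem_iInter, Set.mem_compl_iff,
          Set.mem_singleton_iff]
        constructor
        · intro hx hxT; exact hx x hxT rfl
        · intro hx t ht he; exact hx (he ▸ ht)
      have h2 := hμint T hTμ _ hInt
      rw [hint, Set.inter_compl_self] at h2
      exact hμbot h2
  -- the tail sets {a | ν < k a} are in μ
  have hcof : ∀ ν : Cardinal.{0}, ν < κ → {a : κ.ord.ToType | ν < k a} ∈ μ := by
    intro ν hν
    have hkinj : Function.Injective k := by
      intro a b hab
      rcases lt_trichotomy a b with h | h | h
      · exact absurd hab (ne_of_lt (hkinc a b h))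
      · exact h
      · exact absurd hab.symm (ne_of_lt (hkinc b a h))
    set T := {a : κ.ord.ToType | k a ≤ ν} with hTdef
    have hTcard : #T < κ := by
      have hf : ∀ a : T, (k a.1).ord ∈ Set.Iio (ν.ord + 1) := by
        rintro ⟨a, ha⟩
        have : (k a).ord ≤ ν.ord := Cardinal.ord_le_ord.2 ha
        rw [Set.mem_Iio, Ordinal.add_one_eq_succ]
        exact Order.lt_succ_of_le this
      have hinj : Function.Injective (fun a : T => (⟨(k a.1).ord, hf a⟩ : Set.Iio (ν.ord + 1))) := by
        rintro ⟨a, ha⟩ ⟨b, hb⟩ hab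
        simp only [Subtype.mk.injEq] at hab ⊢
        exact hkinj (Cardinal.ord_injective hab)
      have h1 : Cardinal.lift.{1} #T ≤ Cardinal.lift.{0} #(Set.Iio (ν.ord + 1)) :=
        Cardinal.lift_mk_le'.2 ⟨⟨_, hinj⟩⟩
      rw [Ordinal.mk_Iio_ordinal, Cardinal.lift_lift] at h1
      have h2 : #T ≤ ν + 1 := by
        have h3 : #T ≤ (ν.ord + 1).card := by exact_mod_cast Cardinal.lift_le.1 h1
        rwa [Ordinal.card_add, Ordinal.card_one, Cardinal.card_ord] at h3
      refine lt_of_le_of_lt h2 ?_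
      rcases lt_or_ge ν ℵ₀ with h | h
      · exact lt_trans (Cardinal.add_lt_aleph0 h Cardinal.one_lt_aleph0) hκ.1
      · rwa [Cardinal.add_one_eq h]
    rcases hμsplit T (Set.subset_univ _) with h | h
    · exact absurd h (hsmall T hTcard)
    · have : Set.univ \ T = {a : κ.ord.ToType | ν < k a} := by
        ext a; simp [hTdef, not_le]
      rwa [this] at h
  obtain ⟨hm1, hm2, hm3⟩ : (∀ a, IsUltrafilterOn (Pkl (k a) lam) (m a)) ∧
      (∀ a, IsKComplete (k a) (m a)) ∧ (∀ a, IsFine (k a) lam (m a)) :=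
    ⟨fun a => (hm a).1, fun a => (hm a).2.1, fun a => (hm a).2.2⟩
  refine ⟨⟨fun X hX => hX.1, ?_, ?_, ?_, ?_, ?_⟩, ?_, ?_⟩
  · -- top
    refine ⟨subset_rfl, ?_⟩
    have : {a : κ.ord.ToType | {p ∈ Pkl κ lam | #p < k a} ∈ m a} = Set.univ := by
      apply Set.eq_univ_of_forall
      intro a
      show {p ∈ Pkl κ lam | #p < k a} ∈ m a
      rw [hPkl_restrict a]
      exact (hm1 a).2.1
    rw [this]; exact hμtop
  · -- bot
    rintro ⟨-, h⟩
    have : {a : κ.ord.ToType | {p ∈ (∅ : Set (Set lam.ord.ToType)) | #p < k a} ∈ m a} = ∅ := by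
      apply Set.eq_empty_of_forall_notMem
      intro a ha
      have : {p ∈ (∅ : Set (Set lam.ord.ToType)) | #p < k a} = ∅ := by
        ext p; simp
      simp only [Set.mem_setOf_eq] at ha
      rw [this] at ha
      exact (hm1 a).2.2.1 ha
    rw [this] at h
    exact hμbot h
  · -- upward closed
    rintro X ⟨hXsub, hXμ⟩ Y hYsub hXY
    refine ⟨hYsub, ?_⟩
    refine hμup _ hXμ _ (Set.subset_univ _) ?_
    intro a ha
    exact (hm1 a).2.2.2.1 _ ha _ (hr_sub a Y) (fun p hp => ⟨hXY hp.1, hp.2⟩)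
  · -- intersection
    rintro X ⟨hXsub, hXμ⟩ Y ⟨hYsub, hYμ⟩
    refine ⟨fun p hp => hXsub hp.1, ?_⟩
    refine hμup _ (hμint _ hXμ _ hYμ) _ (Set.subset_univ _) ?_
    rintro a ⟨haX, haY⟩
    have := (hm1 a).2.2.2.2.1 _ haX _ haY
    have heq : {p ∈ X | #p < k a} ∩ {p ∈ Y | #p < k a} = {p ∈ X ∩ Y | #p < k a} := by
      ext p
      simp only [Set.mem_inter_iff, Set.mem_setOf_eq, Set.mem_sep_iff]
      tauto
    rwa [heq] at this
  · -- ultra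
    intro X hXsub
    set A := {a : κ.ord.ToType | {p ∈ X | #p < k a} ∈ m a} with hA
    rcases hμsplit A (Set.subset_univ _) with h | h
    · exact Or.inl ⟨hXsub, h⟩
    · refine Or.inr ⟨Set.diff_subset, ?_⟩
      refine hμup _ h _ (Set.subset_univ _) ?_
      rintro a ⟨-, haA⟩
      show {p ∈ Pkl κ lam \ X | #p < k a} ∈ m a
      rcases (hm1 a).2.2.2.2.2 {p ∈ X | #p < k a} (hr_sub a X) with h1 | h1
      · exact absurd h1 haA
      · have heq : Pkl (k a) lam \ {p ∈ X | #p < k a} = {p ∈ Pkl κ lam \ X | #p < k a} := by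
          ext p
          simp only [Set.mem_diff, Set.mem_sep_iff, Pkl, Set.mem_setOf_eq]
          constructor
          · rintro ⟨h1, h2⟩
            exact ⟨⟨h1.trans (hklt a), fun hp => h2 ⟨hp, h1⟩⟩, h1⟩
          · rintro ⟨⟨-, h2⟩, h3⟩
            exact ⟨h3, fun hp => h2 hp.1⟩
        rwa [heq] at h1
  · -- κ-completeness
    intro S hSne hScard hSmem
    obtain ⟨X0, hX0⟩ := hSne
    refine ⟨fun p hp => (hSmem X0 hX0).1 (hp X0 hX0), ?_⟩
    set Bset : Set (Set κ.ord.ToType) :=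
      (fun X : Set (Set lam.ord.ToType) => {a : κ.ord.ToType | {p ∈ X | #p < k a} ∈ m a}) '' S
      with hBset
    have hB : ⋂₀ Bset ∈ μ := by
      refine hμc Bset (Set.Nonempty.image _ ⟨X0, hX0⟩)
        (lt_of_le_of_lt Cardinal.mk_image_le hScard) ?_
      rintro B ⟨X, hX, rfl⟩
      exact (hSmem X hX).2
    have hC : {a : κ.ord.ToType | #S < k a} ∈ μ := hcof #S hScard
    refine hμup _ (hμint _ hB _ hC) _ (Set.subset_univ _) ?_
    rintro a ⟨haB, haC⟩
    show {p : Set lam.ord.ToType | p ∈ ⋂₀ S ∧ #p < k a} ∈ m a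
    have h1 : ∀ X ∈ S, {p ∈ X | #p < k a} ∈ m a := by
      intro X hX
      exact haB _ ⟨X, hX, rfl⟩
    have h2 := hm2 a ((fun X : Set (Set lam.ord.ToType) => {p ∈ X | #p < k a}) '' S)
      (Set.Nonempty.image _ ⟨X0, hX0⟩)
      (lt_of_le_of_lt Cardinal.mk_image_le haC)
      (by rintro Y ⟨X, hX, rfl⟩; exact h1 X hX)
    have heq : ⋂₀ ((fun X : Set (Set lam.ord.ToType) => {p ∈ X | #p < k a}) '' S) = {p : Set lam.ord.ToType | p ∈ ⋂₀ S ∧ #p < k a} := by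
      ext p
      simp only [Set.sInter_image, Set.mem_iInter, Set.mem_sep_iff, Set.mem_sInter]
      constructor
      · intro h
        exact ⟨fun X hX => (h X hX).1, (h X0 hX0).2⟩
      · rintro ⟨h, hp⟩ X hX
        exact ⟨h X hX, hp⟩
    rwa [heq] at h2
  · -- fineness
    intro a0
    refine ⟨fun x hx => hx.1, ?_⟩
    have : {a : κ.ord.ToType |
        {p ∈ {x | x ∈ Pkl κ lam ∧ a0 ∈ x} | #p < k a} ∈ m a} = Set.univ := by
      apply Set.eq_univ_of_forall
      intro b
      have hf := hm3 b a0
      have heq : {p ∈ {x | x ∈ Pkl κ lam ∧ a0 ∈ x} | #p < k b}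
          = {x | x ∈ Pkl (k b) lam ∧ a0 ∈ x} := by
        ext p
        simp only [Pkl, Set.mem_setOf_eq, Set.mem_sep_iff]
        constructor
        · rintro ⟨⟨-, h2⟩, h3⟩; exact ⟨h3, h2⟩
        · rintro ⟨h1, h2⟩; exact ⟨⟨h1.trans (hklt b), h2⟩, h1⟩
      show {p ∈ {x | x ∈ Pkl κ lam ∧ a0 ∈ x} | #p < k b} ∈ m b
      rw [heq]
      exact hf
    rw [this]
    exact hμtop
end
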